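/- arXiv:1911.06649 — 4 statements merged into one kernel-verified Lean document; each statement's English description precedes it below -/
import Mathlib

section
/- Let (a_m)_{m∈ℕ} be a sequence of complex numbers. Then, as formal power series in t over ℂ, ∑_{n≥0} (t^n/n!) ∑_{σ∈S_n} ∏_{j=1}^n a_j^{C_j(σ)} = exp(∑_{k≥1} (a_k/k) t^k); equivalently, for every n ≥ 0, (1/n!) ∑_{σ∈S_n} ∏_{j=1}^n a_j^{C_j(σ)} equals the coefficient of t^n in exp(∑_{k≥1} (a_k/k) t^k). -/
open Filter Nat
open scoped BigOperators

noncomputable section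

/-- `cycNum n σ k` is the number of cycles of length `k` in the cycle decomposition
of the permutation `σ` of `{1,…,n}` (fixed points count as cycles of length 1). -/
def cycNum (n : ℕ) (σ : Equiv.Perm (Fin n)) (k : ℕ) : ℕ :=
  if k = 1 then n - σ.support.card else Multiset.count k σ.cycleType

/-- The `n`-th coefficient of `exp g = ∑_m g^m / m!` for a formal power series `g`
over `ℂ` (the sum of coefficients is a convergent, in fact finite, sum whenever the
constant term of `g` vanishes). -/
def expCoeffC (g : PowerSeries ℂ) (n : ℕ) : ℂ :=
  ∑' m : ℕ, (m ! : ℂ)⁻¹ * PowerSeries.coeff (R := ℂ) n (g ^ m)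


namespace PolyaAux
open Finset Equiv Equiv.Perm PowerSeries

variable (a : ℕ → ℂ)

def wt {α : Type} [Fintype α] [DecidableEq α] (σ : Perm α) : ℂ :=
  a 1 ^ (Fintype.card α - σ.support.card) * (σ.cycleType.map a).prod

def bb (n : ℕ) : ℂ := ∑ σ : Perm (Fin n), wt a σ

theorem prod_eq_wt (n : ℕ) (σ : Perm (Fin n)) :
    ∏ j ∈ Finset.Icc 1 n, a j ^ _root_.cycNum n σ j = wt a σ := by
  rcases Nat.eq_zero_or_pos n with h0 | hn
  · subst h0
    have : σ = 1 := Subsingleton.elim _ _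
    subst this
    simp [wt, _root_.cycNum]
  have h1 : (1 : ℕ) ∈ Finset.Icc 1 n := by simp [hn]; omega
  rw [← Finset.prod_erase_mul _ _ h1]
  have hsub : σ.cycleType.toFinset ⊆ (Finset.Icc 1 n).erase 1 := by
    intro j hj
    rw [Multiset.mem_toFinset] at hj
    have h2 : 2 ≤ j := Equiv.Perm.two_le_of_mem_cycleType hj
    have hle : j ≤ n := by
      calc j ≤ σ.cycleType.sum := Multiset.le_sum_of_mem hj
      _ = σ.support.card := Equiv.Perm.sum_cycleType σ
      _ ≤ n := by simpa using Finset.card_le_card (Finset.subset_univ σ.support)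
    simp [Finset.mem_erase, Finset.mem_Icc]
    omega
  have hprod : ∏ j ∈ (Finset.Icc 1 n).erase 1, a j ^ _root_.cycNum n σ j
      = (σ.cycleType.map a).prod := by
    rw [Finset.prod_multiset_map_count]
    rw [Finset.prod_subset hsub]
    · apply Finset.prod_congr rfl
      intro j hj
      have : j ≠ 1 := (Finset.mem_erase.mp hj).1
      simp [_root_.cycNum, this]
    · intro j _ hj
      rw [Multiset.mem_toFinset] at hj
      have : Multiset.count j σ.cycleType = 0 := Multiset.count_eq_zero.mpr hj
      rw [this, pow_zero]
  rw [hprod, wt, _root_.cycNum, if_pos rfl, Fintype.card_fin, mul_comm]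


theorem cycleType_permCongr {β γ : Type} [Fintype β] [DecidableEq β] [Fintype γ] [DecidableEq γ]
    (e : β ≃ γ) (σ : Perm β) : (e.permCongr σ).cycleType = σ.cycleType := by
  classical
  let f : β ≃ Subtype (fun _ : γ => True) := e.trans (Equiv.subtypeUnivEquiv fun _ => trivial).symm
  have h : σ.extendDomain f = e.permCongr σ := by
    ext x
    rw [Equiv.Perm.extendDomain_apply_subtype σ f trivial]
    simp [f, Equiv.subtypeUnivEquiv]
  rw [← h, Equiv.Perm.cycleType_extendDomain]

theorem support_card_permCongr {β γ : Type} [Fintype β] [DecidableEq β] [Fintype γ] [DecidableEq γ]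
    (e : β ≃ γ) (σ : Perm β) : (e.permCongr σ).support.card = σ.support.card := by
  have h : (e.permCongr σ).support = σ.support.map e.toEmbedding := by
    ext x
    simp only [Equiv.Perm.mem_support, Finset.mem_map, Equiv.permCongr_apply,
      Equiv.coe_toEmbedding]
    constructor
    · intro h
      refine ⟨e.symm x, ?_, by simp⟩
      intro hc
      exact h (by simp [hc])
    · rintro ⟨y, hy, rfl⟩
      simp [hy]
  rw [h, Finset.card_map]

/-- Lemma B: sum of truncated weights over permutations fixing everything outside `T`. -/
theorem sum_subperm (n : ℕ) (T : Finset (Fin n)) :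
    ∑ τ ∈ Finset.univ.filter (fun τ : Perm (Fin n) => ∀ x ∉ T, τ x = x),
      a 1 ^ (T.card - τ.support.card) * (τ.cycleType.map a).prod = bb a T.card := by
  classical
  have step1 : ∑ g : Perm {x : Fin n // x ∈ T},
        a 1 ^ (T.card - g.support.card) * (g.cycleType.map a).prod
      = ∑ τ ∈ Finset.univ.filter (fun τ : Perm (Fin n) => ∀ x ∉ T, τ x = x),
      a 1 ^ (T.card - τ.support.card) * (τ.cycleType.map a).prod := by
    refine Finset.sum_bij' (fun g _ => Equiv.Perm.ofSubtype g)
      (fun τ hτ => τ.subtypePerm ?mem) ?hi ?hj ?left ?right ?h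
    case mem =>
      rw [Finset.mem_filter] at hτ
      intro x
      symm
      constructor
      · intro hx
        by_contra hc
        have h1 := hτ.2 (τ x) hc
        have h2 : τ x = x := τ.injective h1
        rw [h2] at hc
        exact hc hx
      · intro hx
        by_contra hc
        rw [hτ.2 x hc] at hx
        exact hc hx
    case hi =>
      intro g _
      rw [Finset.mem_filter]
      exact ⟨Finset.mem_univ _, fun x hx => Equiv.Perm.ofSubtype_apply_of_not_mem g hx⟩
    case hj =>
      intro τ _
      exact Finset.mem_univ _
    case left =>
      intro g _
      ext x
      simp [Equiv.Perm.subtypePerm_apply, Equiv.Perm.ofSubtype_apply_of_mem]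
    case right =>
      intro τ hτ
      rw [Finset.mem_filter] at hτ
      apply Equiv.Perm.ofSubtype_subtypePerm
      intro x hx
      by_contra hc
      exact hx (hτ.2 x hc)
    case h =>
      intro g _
      rw [Equiv.Perm.cycleType_ofSubtype, Equiv.Perm.support_ofSubtype, Finset.card_map]
      congr!
  rw [← step1]
  have e : {x : Fin n // x ∈ T} ≃ Fin T.card :=
    (Fintype.equivFinOfCardEq (Fintype.card_coe T))
  rw [bb]
  apply Fintype.sum_equiv e.permCongr
  intro σ
  rw [wt]
  rw [cycleType_permCongr, support_card_permCongr, Fintype.card_fin]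


def g : PowerSeries ℂ := PowerSeries.mk fun k => if k = 0 then 0 else a k / (k : ℂ)

theorem coeff_g_pow_eq_zero {n m : ℕ} (h : n < m) : coeff n (g a ^ m) = 0 := by
  have hX : (X : PowerSeries ℂ) ∣ g a := by
    rw [PowerSeries.X_dvd_iff]
    simp [g, PowerSeries.constantCoeff_mk]
  have hd : (X : PowerSeries ℂ) ^ m ∣ g a ^ m := pow_dvd_pow_of_dvd hX m
  exact PowerSeries.X_pow_dvd_iff.mp hd n h

def ee (n : ℕ) : ℂ := expCoeffC (g a) n

theorem ee_eq_sum (n : ℕ) (N : ℕ) (hn : n ≤ N) :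
    ee a n = ∑ m ∈ Finset.range (N + 1), (m.factorial : ℂ)⁻¹ * coeff n (g a ^ m) := by
  rw [ee, expCoeffC]
  apply tsum_eq_sum
  intro m hm
  rw [Finset.mem_range, not_lt] at hm
  rw [coeff_g_pow_eq_zero a (by omega), mul_zero]

theorem ee_zero : ee a 0 = 1 := by
  rw [ee_eq_sum a 0 0 le_rfl]
  simp

theorem derivativeFun_pow (f : PowerSeries ℂ) (m : ℕ) :
    derivativeFun (f ^ (m + 1)) = (m + 1) • (f ^ m * derivativeFun f) := by
  induction m with
  | zero => simp
  | succ m ih =>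
    rw [pow_succ, PowerSeries.derivativeFun_mul, ih, smul_eq_mul, smul_eq_mul,
      mul_smul_comm, ← mul_assoc, ← _root_.pow_succ']
    rw [add_comm, ← succ_nsmul]

theorem coeff_derivative_g (j : ℕ) : coeff j (derivativeFun (g a)) = a (j + 1) := by
  rw [show derivativeFun (g a) = derivative ℂ (g a) from rfl, PowerSeries.coeff_derivative]
  simp only [g, PowerSeries.coeff_mk]
  rw [if_neg (Nat.succ_ne_zero j)]
  have h : ((j : ℂ) + 1) ≠ 0 := Nat.cast_add_one_ne_zero j
  push_cast
  field_simp

theorem ee_rec (n : ℕ) :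
    ((n : ℂ) + 1) * ee a (n + 1) = ∑ j ∈ Finset.range (n + 1), a (j + 1) * ee a (n - j) := by
  have h0 : ee a (n+1) = ∑ m ∈ Finset.range (n + 2),
      (m.factorial : ℂ)⁻¹ * coeff (n+1) (g a ^ m) := ee_eq_sum a (n+1) (n+1) le_rfl
  rw [h0, Finset.sum_range_succ']
  have hz : ((Nat.factorial 0 : ℕ) : ℂ)⁻¹ * coeff (n+1) (g a ^ 0) = 0 := by
    simp [PowerSeries.coeff_one]
  rw [hz, add_zero, Finset.mul_sum]
  have key : ∀ m : ℕ, ((n:ℂ)+1) * (((m+1).factorial : ℂ)⁻¹ * coeff (n+1) (g a ^ (m+1)))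
      = (m.factorial : ℂ)⁻¹ * coeff n (g a ^ m * derivativeFun (g a)) := by
    intro m
    have h1 : coeff n (derivativeFun (g a ^ (m+1)))
        = coeff (n+1) (g a ^ (m+1)) * ((n:ℂ)+1) := PowerSeries.coeff_derivativeFun _ n
    have h2 : coeff n (derivativeFun (g a ^ (m+1)))
        = ((m:ℂ)+1) * coeff n (g a ^ m * derivativeFun (g a)) := by
      rw [derivativeFun_pow, map_nsmul, nsmul_eq_mul]
      push_cast; ring
    have hf : (((m+1).factorial : ℕ) : ℂ) = ((m:ℂ)+1) * (m.factorial : ℂ) := by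
      rw [Nat.factorial_succ]; push_cast; ring
    have hm0 : ((m:ℂ)+1) ≠ 0 := Nat.cast_add_one_ne_zero m
    have hfm : ((m.factorial : ℕ) : ℂ) ≠ 0 := Nat.cast_ne_zero.mpr (Nat.factorial_ne_zero m)
    calc ((n:ℂ)+1) * (((m+1).factorial : ℂ)⁻¹ * coeff (n+1) (g a ^ (m+1)))
        = (((m+1).factorial : ℂ))⁻¹ * (coeff (n+1) (g a ^ (m+1)) * ((n:ℂ)+1)) := by ring
      _ = (((m+1).factorial : ℂ))⁻¹ * (((m:ℂ)+1) * coeff n (g a ^ m * derivativeFun (g a))) := by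
          rw [← h1, h2]
      _ = (m.factorial : ℂ)⁻¹ * coeff n (g a ^ m * derivativeFun (g a)) := by
          rw [hf, mul_inv]
          field_simp
  rw [Finset.sum_congr rfl (fun m _ => key m)]
  -- expand coeff_mul and swap
  have step2 : ∑ m ∈ Finset.range (n+1), (m.factorial : ℂ)⁻¹ * coeff n (g a ^ m * derivativeFun (g a))
      = ∑ p ∈ Finset.HasAntidiagonal.antidiagonal n,
          (∑ m ∈ Finset.range (n+1), (m.factorial : ℂ)⁻¹ * coeff p.1 (g a ^ m)) * coeff p.2 (derivativeFun (g a)) := by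
    simp_rw [PowerSeries.coeff_mul, Finset.mul_sum, Finset.sum_mul]
    rw [Finset.sum_comm]
    apply Finset.sum_congr rfl
    intro p _
    apply Finset.sum_congr rfl
    intro m _
    ring
  rw [step2]
  have step3 : ∀ p ∈ Finset.HasAntidiagonal.antidiagonal n,
      (∑ m ∈ Finset.range (n+1), (m.factorial : ℂ)⁻¹ * coeff p.1 (g a ^ m)) * coeff p.2 (derivativeFun (g a))
      = ee a p.1 * a (p.2 + 1) := by
    intro p hp
    rw [Finset.HasAntidiagonal.mem_antidiagonal] at hp
    rw [← ee_eq_sum a p.1 n (by omega), coeff_derivative_g]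
  rw [Finset.sum_congr rfl step3]
  rw [Finset.Nat.sum_antidiagonal_eq_sum_range_succ (fun k l => ee a k * a (l + 1))]
  rw [← Finset.sum_range_reflect]
  apply Finset.sum_congr rfl
  intro k hk
  rw [Finset.mem_range] at hk
  have h1 : n + 1 - 1 - k = n - k := by omega
  have h2 : n - (n - k) = k := by omega
  rw [h1, h2, mul_comm]


section Rec
variable {N : ℕ}

local notation "α" => Fin (N + 1)

theorem sameCycle_pow (σ : Perm α) (m : ℕ) : σ.SameCycle 0 ((σ ^ m) 0) :=
  ⟨m, by rw [zpow_natCast]⟩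

theorem tau_fix (σ : Perm α) {y : α} (h : σ.SameCycle 0 y) :
    ((σ.cycleOf 0)⁻¹ * σ) y = y := by
  have h1 : σ.cycleOf 0 y = σ y := by rw [Equiv.Perm.cycleOf_apply, if_pos h]
  rw [Equiv.Perm.mul_apply, ← h1, Equiv.Perm.inv_def, Equiv.symm_apply_apply]

theorem tau_fix' (σ : Perm α) {y : α} (h : ¬ σ.SameCycle 0 y) :
    ((σ.cycleOf 0)⁻¹ * σ) y = σ y := by
  have h2 : ¬ σ.SameCycle 0 (σ y) := by
    rwa [Equiv.Perm.sameCycle_apply_right]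
  have h1 : σ.cycleOf 0 (σ y) = σ y := by rw [Equiv.Perm.cycleOf_apply, if_neg h2]
  rw [Equiv.Perm.mul_apply, Equiv.Perm.inv_eq_iff_eq, h1]

theorem disjoint_tau (σ : Perm α) : Equiv.Perm.Disjoint (σ.cycleOf 0) ((σ.cycleOf 0)⁻¹ * σ) := by
  intro x
  by_cases h : σ.SameCycle 0 x
  · exact Or.inr (tau_fix σ h)
  · exact Or.inl (by rw [Equiv.Perm.cycleOf_apply, if_neg h])

theorem card_supp_cycleOf (σ : Perm α) (h : σ 0 ≠ 0) :
    2 ≤ (σ.cycleOf 0).support.card := by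
  have := Equiv.Perm.IsCycle.two_le_card_support (Equiv.Perm.isCycle_cycleOf σ h)
  exact this

/-- in the fiber, lengths work out -/
theorem len_toList {k : ℕ} (σ : Perm α) (hσ : (σ.cycleOf 0).support.card - 1 = k)
    (hk : 0 < k) : (σ.toList 0).length = k + 1 := by
  rw [Equiv.Perm.length_toList]
  have h0 : σ 0 ≠ 0 := by
    intro hc
    have : σ.cycleOf 0 = 1 := (Equiv.Perm.cycleOf_eq_one_iff σ).mpr hc
    rw [this] at hσ
    simp [Equiv.Perm.support_one] at hσ
    omega
  have := card_supp_cycleOf σ h0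
  omega


/-- the forward embedding: the cycle of 0, minus 0, read in order -/
def fwdEmb (k : ℕ) (σ : Perm α) (hlen : ∀ i : Fin k, (i : ℕ) + 1 < (σ.toList 0).length) :
    Fin k ↪ {x : α // x ≠ 0} where
  toFun i := ⟨(σ ^ ((i : ℕ) + 1)) 0, by
    intro hc
    have hnd := σ.nodup_toList 0
    have h0 : (0 : ℕ) < (σ.toList 0).length := lt_trans (Nat.succ_pos _) (hlen i)
    have hg1 : (σ.toList 0).get ⟨(i : ℕ) + 1, hlen i⟩ = (σ ^ ((i : ℕ) + 1)) 0 :=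
      Equiv.Perm.getElem_toList σ 0 _ (hlen i)
    have hg0 : (σ.toList 0).get ⟨0, h0⟩ = 0 := by
      rw [List.get_eq_getElem, Equiv.Perm.getElem_toList σ 0 0 h0, pow_zero, Equiv.Perm.one_apply]
    have : (σ.toList 0).get ⟨(i : ℕ) + 1, hlen i⟩ = (σ.toList 0).get ⟨0, h0⟩ := by
      rw [hg0, hg1, hc]
    have := (hnd.get_inj_iff).mp this
    simp at this⟩
  inj' i j hij := by
    have hnd := σ.nodup_toList 0
    have hgi : (σ.toList 0).get ⟨(i : ℕ) + 1, hlen i⟩ = (σ ^ ((i : ℕ) + 1)) 0 :=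
      Equiv.Perm.getElem_toList σ 0 _ (hlen i)
    have hgj : (σ.toList 0).get ⟨(j : ℕ) + 1, hlen j⟩ = (σ ^ ((j : ℕ) + 1)) 0 :=
      Equiv.Perm.getElem_toList σ 0 _ (hlen j)
    have hc : ((σ ^ ((i : ℕ) + 1)) 0 : α) = (σ ^ ((j : ℕ) + 1)) 0 := congrArg Subtype.val hij
    have : (σ.toList 0).get ⟨(i : ℕ) + 1, hlen i⟩ = (σ.toList 0).get ⟨(j : ℕ) + 1, hlen j⟩ := by
      rw [hgi, hgj, hc]
    have := (hnd.get_inj_iff).mp this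
    simp only [Fin.mk.injEq, Nat.add_right_cancel_iff] at this
    exact Fin.ext this

/-- backward: the list forming the cycle of 0 -/
def lst {k : ℕ} (f : Fin k ↪ {x : α // x ≠ 0}) : List α :=
  (0 : α) :: List.ofFn (fun i => ((f i : {x : α // x ≠ 0}) : α))

theorem lst_length {k : ℕ} (f : Fin k ↪ {x : α // x ≠ 0}) : (lst f).length = k + 1 := by
  simp [lst]

theorem lst_nodup {k : ℕ} (f : Fin k ↪ {x : α // x ≠ 0}) : (lst f).Nodup := by
  rw [lst, List.nodup_cons]
  constructor
  · intro hc
    rw [List.mem_ofFn] at hc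
    obtain ⟨i, hi⟩ := hc
    exact (f i).2 hi
  · rw [List.nodup_ofFn]
    intro i j hij
    exact f.injective (Subtype.ext hij)

theorem mem_lst_iff {k : ℕ} (f : Fin k ↪ {x : α // x ≠ 0}) (x : α) :
    x ∈ lst f ↔ x = 0 ∨ ∃ i, ((f i : {x : α // x ≠ 0}) : α) = x := by
  constructor
  · intro hx
    rcases List.mem_cons.mp hx with h | h
    · exact Or.inl h
    · rcases List.mem_ofFn.mp h with ⟨i, hi⟩
      exact Or.inr ⟨i, hi⟩
  · rintro (rfl | ⟨i, rfl⟩)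
    · exact List.mem_cons_self
    · exact List.mem_cons_of_mem _ (List.mem_ofFn.mpr ⟨i, rfl⟩)

theorem tau_fix_lst {k : ℕ} (f : Fin k ↪ {x : α // x ≠ 0}) (τ : Perm α)
    (hτ0 : τ 0 = 0) (hτf : ∀ i, τ ((f i : {x : α // x ≠ 0}) : α) = ((f i : {x : α // x ≠ 0}) : α)) :
    ∀ x ∈ lst f, τ x = x := by
  intro x hx
  rw [mem_lst_iff] at hx
  rcases hx with rfl | ⟨i, rfl⟩
  · exact hτ0
  · exact hτf i

theorem disj_lst {k : ℕ} (f : Fin k ↪ {x : α // x ≠ 0}) (τ : Perm α)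
    (hτ0 : τ 0 = 0) (hτf : ∀ i, τ ((f i : {x : α // x ≠ 0}) : α) = ((f i : {x : α // x ≠ 0}) : α)) :
    Equiv.Perm.Disjoint (lst f).formPerm τ := by
  intro x
  by_cases hx : x ∈ lst f
  · exact Or.inr (tau_fix_lst f τ hτ0 hτf x hx)
  · exact Or.inl (List.formPerm_apply_of_notMem hx)

theorem lst_ne_singleton {k : ℕ} (hk : 0 < k) (f : Fin k ↪ {x : α // x ≠ 0}) :
    ∀ x : α, lst f ≠ [x] := by
  intro x hc
  apply_fun List.length at hc
  rw [lst_length] at hc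
  simp at hc
  omega

theorem isCycle_lst {k : ℕ} (hk : 0 < k) (f : Fin k ↪ {x : α // x ≠ 0}) :
    (lst f).formPerm.IsCycle :=
  List.isCycle_formPerm (lst_nodup f) (by rw [lst_length]; omega)

theorem supp_lst {k : ℕ} (hk : 0 < k) (f : Fin k ↪ {x : α // x ≠ 0}) :
    (lst f).formPerm.support = (lst f).toFinset :=
  List.support_formPerm_of_nodup _ (lst_nodup f) (lst_ne_singleton hk f)

theorem supp_lst_card {k : ℕ} (hk : 0 < k) (f : Fin k ↪ {x : α // x ≠ 0}) :
    (lst f).formPerm.support.card = k + 1 := by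
  rw [supp_lst hk f, List.toFinset_card_of_nodup (lst_nodup f), lst_length]

theorem lst_formPerm_zero_ne {k : ℕ} (hk : 0 < k) (f : Fin k ↪ {x : α // x ≠ 0}) :
    (lst f).formPerm 0 ≠ 0 := by
  have h0 : (0 : α) ∈ (lst f).formPerm.support := by
    rw [supp_lst hk f, List.mem_toFinset]
    exact List.mem_cons_self
  exact Equiv.Perm.mem_support.mp h0

theorem cycleOf_lst_mul {k : ℕ} (hk : 0 < k) (f : Fin k ↪ {x : α // x ≠ 0}) (τ : Perm α)
    (hτ0 : τ 0 = 0) (hτf : ∀ i, τ ((f i : {x : α // x ≠ 0}) : α) = ((f i : {x : α // x ≠ 0}) : α)) :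
    ((lst f).formPerm * τ).cycleOf 0 = (lst f).formPerm := by
  rw [Equiv.Perm.cycleOf_mul_of_apply_right_eq_self ((disj_lst f τ hτ0 hτf).commute) 0 hτ0]
  exact Equiv.Perm.IsCycle.cycleOf_eq (isCycle_lst hk f) (lst_formPerm_zero_ne hk f)

/-- weight splitting, case σ 0 ≠ 0 -/
theorem wt_split {k : ℕ} (σ : Perm α) (h0 : σ 0 ≠ 0)
    (hcard : (σ.cycleOf 0).support.card = k + 1) :
    wt a σ = a (k + 1) * (a 1 ^ (N - k - ((σ.cycleOf 0)⁻¹ * σ).support.card) *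
      ((((σ.cycleOf 0)⁻¹ * σ).cycleType.map a)).prod) := by
  set τ := (σ.cycleOf 0)⁻¹ * σ with hτ
  have hdec : σ = σ.cycleOf 0 * τ := by rw [hτ, mul_inv_cancel_left]
  have hcyc : (σ.cycleOf 0).IsCycle := Equiv.Perm.isCycle_cycleOf σ h0
  have hctc : (σ.cycleOf 0).cycleType = {k + 1} := by
    rw [Equiv.Perm.IsCycle.cycleType hcyc, hcard]
  have hct : σ.cycleType = {k + 1} + τ.cycleType := by
    conv_lhs => rw [hdec]
    rw [Equiv.Perm.Disjoint.cycleType_mul (disjoint_tau σ), hctc]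
  have hsc : σ.support.card = (k + 1) + τ.support.card := by
    conv_lhs => rw [hdec]
    rw [Equiv.Perm.Disjoint.card_support_mul (disjoint_tau σ), hcard]
  have hle : σ.support.card ≤ N + 1 := by
    have := Finset.card_le_card (Finset.subset_univ σ.support)
    simpa using this
  rw [wt, hct, hsc, Multiset.map_add, Multiset.prod_add, Fintype.card_fin]
  have hexp : N + 1 - ((k + 1) + τ.support.card) = N - k - τ.support.card := by omega
  rw [hexp]
  simp only [Multiset.map_singleton, Multiset.prod_singleton]
  ring

/-- weight splitting, case σ 0 = 0 -/
theorem wt_fix (σ : Perm α) (h0 : σ 0 = 0) :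
    wt a σ = a 1 * (a 1 ^ (N - 0 - σ.support.card) * ((σ.cycleType.map a)).prod) := by
  have hsub : σ.support ⊆ Finset.univ.erase 0 := by
    intro x hx
    rw [Finset.mem_erase]
    refine ⟨?_, Finset.mem_univ _⟩
    rintro rfl
    exact (Equiv.Perm.mem_support.mp hx) h0
  have hle : σ.support.card ≤ N := by
    have := Finset.card_le_card hsub
    rwa [Finset.card_erase_of_mem (Finset.mem_univ _), Finset.card_univ, Fintype.card_fin,
      Nat.add_sub_cancel] at this
  rw [wt, Fintype.card_fin]
  have : N + 1 - σ.support.card = (N - 0 - σ.support.card) + 1 := by omega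
  rw [this, pow_succ]
  ring


theorem fwdEmb_apply (k : ℕ) (σ : Perm α) (hlen : ∀ i : Fin k, (i : ℕ) + 1 < (σ.toList 0).length)
    (i : Fin k) : ((fwdEmb k σ hlen i : {x : α // x ≠ 0}) : α) = (σ ^ ((i : ℕ) + 1)) 0 := rfl

theorem fiber_cases (σ : Perm α) (k : ℕ) (hσ : (σ.cycleOf 0).support.card - 1 = k) :
    (k = 0 ∧ σ 0 = 0 ∧ σ.cycleOf 0 = 1) ∨
    (0 < k ∧ σ 0 ≠ 0 ∧ (σ.cycleOf 0).support.card = k + 1) := by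
  by_cases h0 : σ 0 = 0
  · left
    have h1 := (Equiv.Perm.cycleOf_eq_one_iff σ).mpr h0
    refine ⟨?_, h0, h1⟩
    rw [h1] at hσ
    simp [Equiv.Perm.support_one] at hσ
    omega
  · right
    have h2 := card_supp_cycleOf σ h0
    exact ⟨by omega, h0, by omega⟩

theorem lst_fwdEmb {k : ℕ} (σ : Perm α) (h0 : σ 0 ≠ 0)
    (hcard : (σ.cycleOf 0).support.card = k + 1)
    (hlen : ∀ i : Fin k, (i : ℕ) + 1 < (σ.toList 0).length) :
    lst (fwdEmb k σ hlen) = σ.toList 0 := by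
  have hlength : (σ.toList 0).length = k + 1 := by
    rw [Equiv.Perm.length_toList, hcard]
  apply List.ext_getElem
  · rw [lst_length, hlength]
  · intro m h1 h2
    rw [lst_length] at h1
    rcases m with _ | m
    · simp only [lst, List.getElem_cons_zero]
      have := Equiv.Perm.getElem_toList σ 0 0 h2
      rw [this, pow_zero, Equiv.Perm.one_apply]
    · simp only [lst, List.getElem_cons_succ, List.getElem_ofFn]
      have := Equiv.Perm.getElem_toList σ 0 (m + 1) h2
      rw [this]
      rfl

theorem lst_pow_head {k : ℕ} (f : Fin k ↪ {x : α // x ≠ 0}) (i : Fin k) :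
    ((lst f).formPerm ^ ((i : ℕ) + 1)) 0 = ((f i : {x : α // x ≠ 0}) : α) := by
  have h := List.formPerm_pow_apply_head (0 : α)
    (List.ofFn fun j => ((f j : {x : α // x ≠ 0}) : α)) (lst_nodup f) ((i : ℕ) + 1)
  have hlen : ((0 : α) :: List.ofFn fun j => ((f j : {x : α // x ≠ 0}) : α)).length = k + 1 := by
    simp
  have hidx : ((i : ℕ) + 1) % ((0 : α) :: List.ofFn fun j => ((f j : {x : α // x ≠ 0}) : α)).length
      = (i : ℕ) + 1 := by
    rw [hlen]
    exact Nat.mod_eq_of_lt (by omega)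
  have h3 : ((0 : α) :: List.ofFn fun j => ((f j : {x : α // x ≠ 0}) : α))[((i : ℕ) + 1) %
      ((0 : α) :: List.ofFn fun j => ((f j : {x : α // x ≠ 0}) : α)).length]?
      = some ((f i : {x : α // x ≠ 0}) : α) := by
    rw [hidx, List.getElem?_cons_succ, List.getElem?_ofFn]
    simp [List.ofFnNthVal, i.isLt]
  have h4 := List.getElem?_eq_getElem (i := ((i : ℕ) + 1) %
      ((0 : α) :: List.ofFn fun j => ((f j : {x : α // x ≠ 0}) : α)).length)
      (l := ((0 : α) :: List.ofFn fun j => ((f j : {x : α // x ≠ 0}) : α)))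
      (by apply Nat.mod_lt; simp)
  rw [h3] at h4
  rw [lst, h]
  exact Option.some_inj.mp h4.symm

theorem fiber_eq (k : ℕ) :
    ∑ σ ∈ Finset.univ.filter (fun σ : Perm α => (σ.cycleOf 0).support.card - 1 = k), wt a σ
    = ∑ q ∈ Finset.univ.filter (fun q : (Fin k ↪ {x : α // x ≠ 0}) × Perm α =>
        q.2 0 = 0 ∧ ∀ i, q.2 ((q.1 i : {x : α // x ≠ 0}) : α) = ((q.1 i : {x : α // x ≠ 0}) : α)),
      a (k + 1) * (a 1 ^ (N - k - q.2.support.card) * ((q.2.cycleType.map a)).prod) := by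
  classical
  refine Finset.sum_bij' (fun σ hσ => (fwdEmb k σ (fun i => ?_), (σ.cycleOf 0)⁻¹ * σ))
    (fun q _ => (lst q.1).formPerm * q.2) ?hi ?hj ?left ?right ?h
  -- the length bound
  · have hσ' := (Finset.mem_filter.mp hσ).2
    have hk := i.pos
    have := len_toList σ hσ' hk
    rw [this]
    have := i.isLt
    omega
  case hi =>
    intro σ hσ
    rw [Finset.mem_filter]
    refine ⟨Finset.mem_univ _, tau_fix σ (Equiv.Perm.SameCycle.refl _ _), ?_⟩
    intro i
    rw [fwdEmb_apply]
    exact tau_fix σ (sameCycle_pow σ _)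
  case hj =>
    intro q hq
    rw [Finset.mem_filter] at hq
    obtain ⟨-, hτ0, hτf⟩ := hq
    rw [Finset.mem_filter]
    refine ⟨Finset.mem_univ _, ?_⟩
    rcases Nat.eq_zero_or_pos k with rfl | hk
    · have hl : lst q.1 = [(0 : α)] := by simp [lst]
      rw [hl, List.formPerm_singleton, one_mul]
      have : q.2.cycleOf 0 = 1 := (Equiv.Perm.cycleOf_eq_one_iff q.2).mpr hτ0
      rw [this]
      simp [Equiv.Perm.support_one]
    · rw [cycleOf_lst_mul hk q.1 q.2 hτ0 hτf, supp_lst_card hk q.1]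
      omega
  case left =>
    intro σ hσ
    have hσ' := (Finset.mem_filter.mp hσ).2
    dsimp only
    suffices hs : ∀ (hl : ∀ i : Fin k, (i : ℕ) + 1 < (σ.toList 0).length),
        (lst (fwdEmb k σ hl)).formPerm * ((σ.cycleOf 0)⁻¹ * σ) = σ from hs _
    intro hl
    have key : (lst (fwdEmb k σ hl)).formPerm = σ.cycleOf 0 := by
      rcases fiber_cases σ k hσ' with ⟨hk0, h0, h1⟩ | ⟨hk, h0, hcard⟩
      · subst hk0
        have hl2 : lst (fwdEmb 0 σ hl) = [(0 : α)] := by simp [lst]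
        rw [hl2, List.formPerm_singleton, h1]
      · rw [lst_fwdEmb σ h0 hcard, Equiv.Perm.formPerm_toList]
    rw [key, mul_inv_cancel_left]
  case right =>
    intro q hq
    rw [Finset.mem_filter] at hq
    obtain ⟨-, hτ0, hτf⟩ := hq
    have hcomm : Commute (lst q.1).formPerm q.2 := (disj_lst q.1 q.2 hτ0 hτf).commute
    have hcyc : ((lst q.1).formPerm * q.2).cycleOf 0 = (lst q.1).formPerm := by
      rcases Nat.eq_zero_or_pos k with rfl | hk
      · have hl : lst q.1 = [(0 : α)] := by simp [lst]
        rw [hl, List.formPerm_singleton, one_mul]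
        exact (Equiv.Perm.cycleOf_eq_one_iff q.2).mpr hτ0
      · exact cycleOf_lst_mul hk q.1 q.2 hτ0 hτf
    refine Prod.ext ?_ ?_
    · apply Function.Embedding.ext
      intro i
      apply Subtype.ext
      rw [fwdEmb_apply]
      have hpow : (((lst q.1).formPerm * q.2) ^ ((i : ℕ) + 1)) 0
          = ((lst q.1).formPerm ^ ((i : ℕ) + 1)) 0 := by
        rw [hcomm.mul_pow, Equiv.Perm.mul_apply,
          Equiv.Perm.pow_apply_eq_self_of_apply_eq_self hτ0]
      show (((lst q.1).formPerm * q.2) ^ ((i : ℕ) + 1)) 0 = _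
      rw [hpow]
      exact lst_pow_head q.1 i
    · show ((((lst q.1).formPerm * q.2)).cycleOf 0)⁻¹ * ((lst q.1).formPerm * q.2) = q.2
      rw [hcyc, inv_mul_cancel_left]
  case h =>
    intro σ hσ
    have hσ' := (Finset.mem_filter.mp hσ).2
    dsimp only
    rcases fiber_cases σ k hσ' with ⟨hk0, h0, h1⟩ | ⟨hk, h0, hcard⟩
    · subst hk0
      have hτ : (σ.cycleOf 0)⁻¹ * σ = σ := by rw [h1, inv_one, one_mul]
      rw [hτ]
      exact wt_fix a σ h0
    · exact wt_split a σ h0 hcard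


theorem bb_rec : bb a (N + 1) = ∑ k ∈ Finset.range (N + 1),
    (N.descFactorial k : ℂ) * (a (k + 1) * bb a (N - k)) := by
  classical
  have hmaps : ∀ σ : Perm α, σ ∈ Finset.univ →
      (σ.cycleOf 0).support.card - 1 ∈ Finset.range (N + 1) := by
    intro σ _
    rw [Finset.mem_range]
    have h := Finset.card_le_card (Finset.subset_univ (σ.cycleOf 0).support)
    rw [Finset.card_univ, Fintype.card_fin] at h
    omega
  rw [bb, ← Finset.sum_fiberwise_of_maps_to hmaps (wt a)]
  refine Finset.sum_congr rfl ?_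
  intro k hk
  rw [Finset.mem_range] at hk
  rw [fiber_eq a k, Finset.sum_filter, Fintype.sum_prod_type]
  have hstep : ∀ f : Fin k ↪ {x : α // x ≠ 0},
      (∑ τ : Perm α, if τ 0 = 0 ∧ ∀ i, τ ((f i : {x : α // x ≠ 0}) : α) = ((f i : {x : α // x ≠ 0}) : α)
        then a (k+1) * (a 1 ^ (N - k - τ.support.card) * ((τ.cycleType.map a)).prod) else 0)
      = a (k + 1) * bb a (N - k) := by
    intro f
    set T : Finset α := (insert 0 (Finset.univ.image
      (fun i => ((f i : {x : α // x ≠ 0}) : α))))ᶜ with hT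
    have h0img : (0 : α) ∉ Finset.univ.image (fun i => ((f i : {x : α // x ≠ 0}) : α)) := by
      rw [Finset.mem_image]
      rintro ⟨i, -, hi⟩
      exact (f i).2 hi
    have hTcard : T.card = N - k := by
      rw [hT, Finset.card_compl,
        Finset.card_insert_of_notMem h0img,
        Finset.card_image_of_injective _ (fun i j hij => f.injective (Subtype.ext hij))]
      rw [Finset.card_univ, Fintype.card_fin, Fintype.card_fin]
      omega
    have hcond : ∀ τ : Perm α,
        ((τ 0 = 0 ∧ ∀ i, τ ((f i : {x : α // x ≠ 0}) : α) = ((f i : {x : α // x ≠ 0}) : α))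
          ↔ ∀ x ∉ T, τ x = x) := by
      intro τ
      constructor
      · rintro ⟨h1, h2⟩ x hx
        rw [hT, Finset.mem_compl, not_not] at hx
        rcases Finset.mem_insert.mp hx with rfl | hx
        · exact h1
        · rcases Finset.mem_image.mp hx with ⟨i, -, rfl⟩
          exact h2 i
      · intro h
        constructor
        · exact h 0 (by rw [hT, Finset.mem_compl, not_not]; exact Finset.mem_insert_self _ _)
        · intro i
          exact h _ (by
            rw [hT, Finset.mem_compl, not_not]
            exact Finset.mem_insert_of_mem (Finset.mem_image_of_mem _ (Finset.mem_univ i)))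
    have hmid : (∑ τ : Perm α, if τ 0 = 0 ∧ ∀ i, τ ((f i : {x : α // x ≠ 0}) : α) = ((f i : {x : α // x ≠ 0}) : α)
        then a (k+1) * (a 1 ^ (N - k - τ.support.card) * ((τ.cycleType.map a)).prod) else 0)
        = ∑ τ ∈ Finset.univ.filter (fun τ : Perm α => ∀ x ∉ T, τ x = x),
            a (k+1) * (a 1 ^ (T.card - τ.support.card) * ((τ.cycleType.map a)).prod) := by
      rw [Finset.sum_filter]
      refine Finset.sum_congr rfl ?_
      intro τ _
      rw [hTcard]
      exact if_congr (hcond τ) rfl rfl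
    rw [hmid, ← Finset.mul_sum, sum_subperm a (N+1) T, hTcard]
  rw [Finset.sum_congr rfl (fun f _ => hstep f), Finset.sum_const, Finset.card_univ,
    Fintype.card_embedding_eq, Fintype.card_fin, nsmul_eq_mul]
  have hcs : Fintype.card {x : α // x ≠ 0} = N := by
    simp [Fintype.card_subtype_compl]
  rw [hcs]

end Rec

theorem bb_zero : bb a 0 = 1 := by
  rw [bb, Fintype.sum_subsingleton _ (1 : Perm (Fin 0))]
  simp [wt, Equiv.Perm.cycleType_one]

theorem main_ind : ∀ n : ℕ, ((n.factorial : ℕ) : ℂ)⁻¹ * bb a n = ee a n := by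
  intro n
  induction n using Nat.strong_induction_on with
  | _ n ih =>
    match n with
    | 0 => simp [bb_zero, ee_zero]
    | (m + 1) =>
      have hm1 : ((m : ℂ) + 1) ≠ 0 := Nat.cast_add_one_ne_zero m
      apply mul_left_cancel₀ hm1
      rw [ee_rec]
      have hfac : ((m : ℂ) + 1) * (((m + 1).factorial : ℕ) : ℂ)⁻¹ = ((m.factorial : ℕ) : ℂ)⁻¹ := by
        have hf : (((m + 1).factorial : ℕ) : ℂ) = ((m : ℂ) + 1) * ((m.factorial : ℕ) : ℂ) := by
          rw [Nat.factorial_succ]; push_cast; ring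
        rw [hf, mul_inv]
        have hfm : ((m.factorial : ℕ) : ℂ) ≠ 0 := Nat.cast_ne_zero.mpr (Nat.factorial_ne_zero m)
        field_simp
      rw [← mul_assoc, hfac, bb_rec, Finset.mul_sum]
      refine Finset.sum_congr rfl ?_
      intro k hk
      rw [Finset.mem_range] at hk
      have hkm : k ≤ m := by omega
      have hdesc : ((m.factorial : ℕ) : ℂ)⁻¹ * ((m.descFactorial k : ℕ) : ℂ)
          = (((m - k).factorial : ℕ) : ℂ)⁻¹ := by
        have h := Nat.factorial_mul_descFactorial hkm
        have hc : (((m - k).factorial : ℕ) : ℂ) * ((m.descFactorial k : ℕ) : ℂ)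
            = ((m.factorial : ℕ) : ℂ) := by exact_mod_cast congrArg (Nat.cast : ℕ → ℂ) h
        have h1 : ((m.factorial : ℕ) : ℂ) ≠ 0 := Nat.cast_ne_zero.mpr (Nat.factorial_ne_zero m)
        have h2 : (((m - k).factorial : ℕ) : ℂ) ≠ 0 :=
          Nat.cast_ne_zero.mpr (Nat.factorial_ne_zero (m - k))
        field_simp
        linear_combination hc
      have hih : (((m - k).factorial : ℕ) : ℂ)⁻¹ * bb a (m - k) = ee a (m - k) :=
        ih (m - k) (by omega)
      calc ((m.factorial : ℕ) : ℂ)⁻¹ * (((m.descFactorial k : ℕ) : ℂ) * (a (k + 1) * bb a (m - k)))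
          = a (k + 1) * ((((m.factorial : ℕ) : ℂ)⁻¹ * ((m.descFactorial k : ℕ) : ℂ)) * bb a (m - k)) := by
            ring
        _ = a (k + 1) * ee a (m - k) := by rw [hdesc, hih]

end PolyaAux

/-- Pólya's enumeration theorem: as formal power series in `t`,
`∑_n (tⁿ/n!) ∑_{σ ∈ S_n} ∏_j a_j^{C_j(σ)} = exp (∑_{k ≥ 1} (a_k/k) t^k)`, i.e. for
every `n`, `(1/n!) ∑_{σ ∈ S_n} ∏_j a_j^{C_j(σ)}` is the `n`-th coefficient of the
right-hand side. -/
theorem polya_enumeration (a : ℕ → ℂ) (n : ℕ) :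
    (n ! : ℂ)⁻¹ * ∑ σ : Equiv.Perm (Fin n), ∏ j ∈ Finset.Icc 1 n, a j ^ cycNum n σ j
      = expCoeffC (PowerSeries.mk fun k => if k = 0 then 0 else a k / (k : ℂ)) n := by
  classical
  have h1 : ∀ σ : Equiv.Perm (Fin n), ∏ j ∈ Finset.Icc 1 n, a j ^ cycNum n σ j
      = PolyaAux.wt a σ := fun σ => PolyaAux.prod_eq_wt a n σ
  rw [Finset.sum_congr rfl (fun σ _ => h1 σ)]
  have h2 : (PowerSeries.mk fun k => if k = 0 then 0 else a k / (k : ℂ)) = PolyaAux.g a := rfl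
  rw [h2]
  exact PolyaAux.main_ind a n
end
end

section
/- Let δ ∈ ℝ, N ∈ ℕ, and let (v_n)_{n∈ℕ} and (x_n)_{n∈ℕ} be sequences with v_n > 0, v_n → 0 and x_n v_n → ∞. Then ∫_{x_n}^∞ x^δ exp(−x v_n) dx = (x_n^δ e^{−x_n v_n} / v_n) · (∑_{j=0}^N (δ)_j / (x_n v_n)^j + O((x_n v_n)^{−N−1})) as n → ∞, where (δ)_0 = 1 and (δ)_j = δ(δ−1)⋯(δ−j+1) for j ≥ 1. -/
open Filter Real Asymptotics MeasureTheory
open scoped Topology BigOperators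

noncomputable section

/-- The falling factorial `(δ)_j = δ (δ-1) ⋯ (δ-j+1)`, with `(δ)_0 = 1`. -/
def fallFac (δ : ℝ) (j : ℕ) : ℝ := ∏ i ∈ Finset.range j, (δ - i)

lemma integrableOn_aux (δ v x : ℝ) (hv : 0 < v) (hx : 0 < x) :
    MeasureTheory.IntegrableOn (fun t => t ^ δ * Real.exp (-t * v)) (Set.Ioi x) := by
  apply integrable_of_isBigO_exp_neg (b := v / 2) (half_pos hv)
  · intro t ht
    have ht0 : t ≠ 0 := (lt_of_lt_of_le hx ht).ne'
    exact ((Real.continuousAt_rpow_const t δ (Or.inl ht0)).continuousWithinAt).mul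
      (((continuous_id.neg.mul continuous_const).rexp).continuousWithinAt)
  · have h1 : (fun t : ℝ => t ^ δ * Real.exp (-(v/2) * t)) =O[atTop] (fun _ : ℝ => (1:ℝ)) :=
      (tendsto_rpow_mul_exp_neg_mul_atTop_nhds_zero δ (v/2) (half_pos hv)).isBigO_one ℝ
    have h2 := h1.mul (isBigO_refl (fun t : ℝ => Real.exp (-(v/2) * t)) atTop)
    have heq : (fun t : ℝ => t ^ δ * Real.exp (-t * v))
        = fun t : ℝ => (t ^ δ * Real.exp (-(v/2) * t)) * Real.exp (-(v/2) * t) := by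
      funext t
      rw [mul_assoc, ← Real.exp_add]
      ring_nf
    rw [heq]
    exact h2.congr_right fun t => one_mul _

lemma integral_exp_aux (c x : ℝ) (hc : 0 < c) :
    ∫ t in Set.Ioi x, Real.exp (-t * c) = Real.exp (-x * c) / c := by
  have hderiv : ∀ t ∈ Set.Ici x, HasDerivAt (fun t => -Real.exp (-t * c) / c)
      (Real.exp (-t * c)) t := by
    intro t _
    have h : HasDerivAt (fun t : ℝ => -t * c) (-c) t := by
      simpa using ((hasDerivAt_id t).neg.mul_const c)
    have := (h.exp.neg.div_const c)
    refine this.congr_deriv ?_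
    field_simp
  have hint : MeasureTheory.IntegrableOn (fun t => Real.exp (-t * c)) (Set.Ioi x) := by
    have := exp_neg_integrableOn_Ioi x hc
    simpa [mul_comm] using this
  have htend : Tendsto (fun t : ℝ => -Real.exp (-t * c) / c) atTop (𝓝 (-0 / c)) := by
    apply Tendsto.div_const
    apply Tendsto.neg
    apply Real.tendsto_exp_atBot.comp
    apply Tendsto.atBot_mul_const hc
    exact tendsto_neg_atBot_iff.mpr tendsto_id
  have := MeasureTheory.integral_Ioi_of_hasDerivAt_of_tendsto' hderiv hint htend
  rw [this]
  field_simp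
  ring

lemma ibp_aux (δ v x : ℝ) (hv : 0 < v) (hx : 0 < x) :
    ∫ t in Set.Ioi x, t ^ δ * Real.exp (-t * v)
      = x ^ δ * Real.exp (-x * v) / v
        + (δ / v) * ∫ t in Set.Ioi x, t ^ (δ - 1) * Real.exp (-t * v) := by
  set g : ℝ → ℝ := fun t => t ^ δ * Real.exp (-t * v) - (δ / v) * (t ^ (δ - 1) * Real.exp (-t * v))
    with hg
  have hderiv : ∀ t ∈ Set.Ici x, HasDerivAt (fun t => -(t ^ δ * Real.exp (-t * v)) / v) (g t) t := by
    intro t ht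
    have ht0 : t ≠ 0 := (lt_of_lt_of_le hx ht).ne'
    have h1 : HasDerivAt (fun t : ℝ => t ^ δ) (δ * t ^ (δ - 1)) t :=
      Real.hasDerivAt_rpow_const (Or.inl ht0)
    have h2 : HasDerivAt (fun t : ℝ => -t * v) (-v) t := by
      simpa using ((hasDerivAt_id t).neg.mul_const v)
    have := ((h1.mul h2.exp).neg.div_const v)
    refine this.congr_deriv ?_
    rw [hg]
    field_simp
    ring
  have hint : MeasureTheory.IntegrableOn g (Set.Ioi x) :=
    (integrableOn_aux δ v x hv hx).sub ((integrableOn_aux (δ - 1) v x hv hx).const_mul _)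
  have htend : Tendsto (fun t : ℝ => -(t ^ δ * Real.exp (-t * v)) / v) atTop (𝓝 (-0 / v)) := by
    apply Tendsto.div_const
    apply Tendsto.neg
    have := tendsto_rpow_mul_exp_neg_mul_atTop_nhds_zero δ v hv
    refine this.congr fun t => ?_
    rw [neg_mul, mul_comm v t, neg_mul]
  have key := MeasureTheory.integral_Ioi_of_hasDerivAt_of_tendsto' hderiv hint htend
  have hsplit : ∫ t in Set.Ioi x, g t
      = (∫ t in Set.Ioi x, t ^ δ * Real.exp (-t * v))
        - (δ / v) * ∫ t in Set.Ioi x, t ^ (δ - 1) * Real.exp (-t * v) := by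
    rw [hg]
    rw [MeasureTheory.integral_sub (integrableOn_aux δ v x hv hx)
      ((integrableOn_aux (δ - 1) v x hv hx).const_mul _), MeasureTheory.integral_const_mul]
  rw [hsplit] at key
  have hz : -0 / v - -(x ^ δ * Real.exp (-x * v)) / v = x ^ δ * Real.exp (-x * v) / v := by ring
  rw [hz] at key
  linarith

lemma expansion_aux (δ v x : ℝ) (hv : 0 < v) (hx : 0 < x) (N : ℕ) :
    ∫ t in Set.Ioi x, t ^ δ * Real.exp (-t * v)
      = (∑ j ∈ Finset.range (N + 1),
            fallFac δ j * x ^ (δ - j) * Real.exp (-x * v) / v ^ (j + 1))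
        + (fallFac δ (N + 1) / v ^ (N + 1)) *
            ∫ t in Set.Ioi x, t ^ (δ - (N + 1)) * Real.exp (-t * v) := by
  induction N with
  | zero =>
      rw [ibp_aux δ v x hv hx]
      norm_num [fallFac]
  | succ N ih =>
      rw [ih, ibp_aux (δ - (N + 1)) v x hv hx]
      conv_rhs => rw [Finset.sum_range_succ]
      have hff : fallFac δ (N + 1 + 1) = fallFac δ (N + 1) * (δ - (N + 1)) := by
        rw [fallFac, fallFac, Finset.prod_range_succ]
        push_cast
        ring_nf
      rw [hff]
      push_cast
      rw [show δ - ((N : ℝ) + 1) - 1 = δ - ((N : ℝ) + 1 + 1) from by ring]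
      have hv' : (v : ℝ) ≠ 0 := hv.ne'
      field_simp
      ring_nf
      congr 2
      exact Finset.sum_congr rfl fun j _ => by ring

lemma bound_aux (a v x : ℝ) (hv : 0 < v) (hx : 0 < x) (h2a : 2 * a ≤ x * v) :
    ∫ t in Set.Ioi x, t ^ a * Real.exp (-t * v) ≤ 2 * x ^ a * Real.exp (-x * v) / v := by
  have hpt : ∀ t ∈ Set.Ioi x, t ^ a * Real.exp (-t * v)
      ≤ (x ^ a * Real.exp (-x * (v/2))) * Real.exp (-t * (v/2)) := by
    intro t ht
    have hxt : x < t := ht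
    have ht0 : 0 < t := hx.trans hxt
    have hlog' : x * (Real.log t - Real.log x) ≤ t - x := by
      have h := Real.log_le_sub_one_of_pos (div_pos ht0 hx)
      rw [Real.log_div ht0.ne' hx.ne'] at h
      have := mul_le_mul_of_nonneg_left h hx.le
      have hxx : x * (t / x - 1) = t - x := by field_simp
      linarith [hxx ▸ this]
    have key : a * (Real.log t - Real.log x) ≤ (t - x) * (v / 2) := by
      rcases le_or_gt a 0 with ha | ha
      · have h1 : Real.log x ≤ Real.log t := Real.log_le_log hx hxt.le
        have h2 : 0 ≤ (t - x) * (v / 2) := mul_nonneg (by linarith) (by linarith)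
        nlinarith
      · have h3 : a * (x * (Real.log t - Real.log x)) ≤ a * (t - x) :=
          mul_le_mul_of_nonneg_left hlog' ha.le
        have h4 : a * (t - x) ≤ (x * v / 2) * (t - x) :=
          mul_le_mul_of_nonneg_right (by linarith) (by linarith)
        have h5 : x * (a * (Real.log t - Real.log x)) ≤ x * ((t - x) * (v / 2)) := by nlinarith
        exact (mul_le_mul_iff_right₀ hx).mp h5
    calc t ^ a * Real.exp (-t * v) = Real.exp (a * Real.log t + -t * v) := by
          rw [Real.rpow_def_of_pos ht0, ← Real.exp_add, mul_comm (Real.log t) a]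
      _ ≤ Real.exp ((a * Real.log x + -x * (v/2)) + -t * (v/2)) :=
          Real.exp_le_exp.mpr (by nlinarith [key])
      _ = (x ^ a * Real.exp (-x * (v/2))) * Real.exp (-t * (v/2)) := by
          rw [Real.rpow_def_of_pos hx, Real.exp_add, Real.exp_add, mul_comm (Real.log x) a]
  have hint1 := integrableOn_aux a v x hv hx
  have hint2 : MeasureTheory.IntegrableOn
      (fun t => (x ^ a * Real.exp (-x * (v/2))) * Real.exp (-t * (v/2))) (Set.Ioi x) := by
    apply MeasureTheory.Integrable.const_mul
    have := exp_neg_integrableOn_Ioi x (half_pos hv)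
    simpa [mul_comm, MeasureTheory.IntegrableOn] using this
  have hmono := MeasureTheory.setIntegral_mono_on hint1 hint2 measurableSet_Ioi hpt
  rw [MeasureTheory.integral_const_mul, integral_exp_aux (v/2) x (half_pos hv)] at hmono
  have hE : Real.exp (-x * (v/2)) * Real.exp (-x * (v/2)) = Real.exp (-x * v) := by
    rw [← Real.exp_add]; congr 1; ring
  calc ∫ t in Set.Ioi x, t ^ a * Real.exp (-t * v)
      ≤ x ^ a * Real.exp (-x * (v/2)) * (Real.exp (-x * (v/2)) / (v/2)) := hmono
    _ = 2 * x ^ a * Real.exp (-x * v) / v := by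
        rw [← hE]; field_simp

lemma nonneg_aux (a v x : ℝ) (hx : 0 < x) :
    0 ≤ ∫ t in Set.Ioi x, t ^ a * Real.exp (-t * v) :=
  MeasureTheory.setIntegral_nonneg measurableSet_Ioi fun t ht =>
    mul_nonneg (Real.rpow_nonneg (hx.trans ht).le a) (Real.exp_nonneg _)

/-- Equation (2.15): for `v_n → 0`, `x_n v_n → ∞`,
`∫_{x_n}^∞ x^δ e^{-x v_n} dx
  = (x_n^δ e^{-x_n v_n} / v_n) (∑_{j=0}^N (δ)_j / (x_n v_n)^j + O((x_n v_n)^{-N-1}))`. -/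
theorem integral_tail_asymptotics
    (δ : ℝ) (N : ℕ) (v x : ℕ → ℝ)
    (hvpos : ∀ n, 0 < v n) (hvlim : Tendsto v atTop (𝓝 0))
    (hxv : Tendsto (fun n => x n * v n) atTop atTop) :
    (fun n : ℕ =>
        (∫ t in Set.Ioi (x n), t ^ δ * Real.exp (-t * v n))
          - (x n ^ δ * Real.exp (-(x n) * v n) / v n) *
              ∑ j ∈ Finset.range (N + 1), fallFac δ j / (x n * v n) ^ j)
      =O[atTop]
      (fun n : ℕ =>
        (x n ^ δ * Real.exp (-(x n) * v n) / v n) * ((x n * v n) ^ (N + 1))⁻¹) := by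
  apply Asymptotics.IsBigO.of_bound (2 * |fallFac δ (N + 1)|)
  have hx_event : ∀ᶠ n in atTop, max (2 * (δ - (N + 1))) 1 ≤ x n * v n :=
    hxv.eventually_ge_atTop _
  filter_upwards [hx_event] with n hn
  have hvn := hvpos n
  have hxvn : 0 < x n * v n := lt_of_lt_of_le zero_lt_one ((le_max_right _ _).trans hn)
  have hxn : 0 < x n := by
    rcases mul_pos_iff.mp hxvn with ⟨h, _⟩ | ⟨_, h2⟩
    · exact h
    · linarith
  set R : ℝ := ∫ t in Set.Ioi (x n), t ^ (δ - (N + 1)) * Real.exp (-t * v n) with hR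
  have hexp := expansion_aux δ (v n) (x n) hvn hxn N
  have hsum : (x n ^ δ * Real.exp (-(x n) * v n) / v n) *
        ∑ j ∈ Finset.range (N + 1), fallFac δ j / (x n * v n) ^ j
      = ∑ j ∈ Finset.range (N + 1),
          fallFac δ j * x n ^ (δ - j) * Real.exp (-(x n) * v n) / v n ^ (j + 1) := by
    rw [Finset.mul_sum]
    refine Finset.sum_congr rfl fun j _ => ?_
    have hxj : (x n : ℝ) ^ (δ - j) = x n ^ δ / x n ^ (j : ℕ) := by
      rw [Real.rpow_sub hxn, Real.rpow_natCast]
    rw [hxj, mul_pow]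
    have h1 : (x n : ℝ) ^ (j : ℕ) ≠ 0 := (pow_pos hxn j).ne'
    have h2 : (v n : ℝ) ≠ 0 := hvn.ne'
    field_simp
    ring
  have hdiff : (∫ t in Set.Ioi (x n), t ^ δ * Real.exp (-t * v n))
      - (x n ^ δ * Real.exp (-(x n) * v n) / v n) *
          ∑ j ∈ Finset.range (N + 1), fallFac δ j / (x n * v n) ^ j
      = fallFac δ (N + 1) / v n ^ (N + 1) * R := by
    rw [hexp, hsum]
    ring
  rw [hdiff]
  have hR0 : 0 ≤ R := nonneg_aux _ _ _ hxn
  have hRb : R ≤ 2 * x n ^ (δ - (N + 1)) * Real.exp (-(x n) * v n) / v n :=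
    bound_aux _ _ _ hvn hxn ((le_max_left _ _).trans hn)
  have hxa : (x n : ℝ) ^ (δ - (N + 1)) = x n ^ δ * ((x n) ^ (N + 1 : ℕ))⁻¹ := by
    rw [Real.rpow_sub hxn, div_eq_mul_inv]
    congr 1
    rw [show ((N : ℝ) + 1) = ((N + 1 : ℕ) : ℝ) by push_cast; ring, Real.rpow_natCast]
  have hEpos : 0 < Real.exp (-(x n) * v n) := Real.exp_pos _
  have hPpos : 0 < (x n : ℝ) ^ δ := Real.rpow_pos_of_pos hxn δ
  rw [Real.norm_eq_abs, Real.norm_eq_abs, abs_mul, abs_div, abs_pow, abs_of_pos hvn,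
    abs_of_nonneg hR0]
  have hrhs : |x n ^ δ * Real.exp (-(x n) * v n) / v n * ((x n * v n) ^ (N + 1))⁻¹|
      = x n ^ δ * Real.exp (-(x n) * v n) / v n * ((x n * v n) ^ (N + 1))⁻¹ := by
    apply abs_of_pos
    positivity
  rw [hrhs]
  calc |fallFac δ (N + 1)| / v n ^ (N + 1) * R
      ≤ |fallFac δ (N + 1)| / v n ^ (N + 1) *
          (2 * (x n ^ δ * ((x n) ^ (N + 1 : ℕ))⁻¹) * Real.exp (-(x n) * v n) / v n) := by
        gcongr
        rw [← hxa]; exact hRb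
    _ = 2 * |fallFac δ (N + 1)| *
          (x n ^ δ * Real.exp (-(x n) * v n) / v n * ((x n * v n) ^ (N + 1))⁻¹) := by
        rw [mul_pow]
        have h1 : ((x n : ℝ) ^ (N + 1 : ℕ)) ≠ 0 := (pow_pos hxn _).ne'
        have h2 : ((v n : ℝ) ^ (N + 1 : ℕ)) ≠ 0 := (pow_pos hvn _).ne'
        field_simp
end
end

section
/- For every n large enough, the equation ∑_{k=1}^∞ θ_k e^{−k v} = n has a unique solution v = v_n > 0, and this solution satisfies v_n ~ (n/Γ(α+1))^{−1/(1+α)} as n → ∞, i.e. v_n (n/Γ(α+1))^{1/(1+α)} → 1. -/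
open Filter Real
open scoped Topology

noncomputable section

open MeasureTheory Set


lemma aux_f_max {α : ℝ} (hα : 0 < α) {t : ℝ} (ht : 0 ≤ t) :
    t ^ α * Real.exp (-t) ≤ α ^ α * Real.exp (-α) := by
  rcases eq_or_lt_of_le ht with h | h
  · rw [← h, Real.zero_rpow hα.ne', zero_mul]
    positivity
  · rw [Real.rpow_def_of_pos h, Real.rpow_def_of_pos hα, ← Real.exp_add, ← Real.exp_add,
      Real.exp_le_exp]
    have hlog : Real.log (t / α) ≤ t / α - 1 := Real.log_le_sub_one_of_pos (by positivity)
    have h1 : Real.log t - Real.log α ≤ t / α - 1 := by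
      rwa [← Real.log_div h.ne' hα.ne']
    have h2 : α * (Real.log t - Real.log α) ≤ α * (t / α - 1) :=
      mul_le_mul_of_nonneg_left h1 hα.le
    have h3 : α * (t / α - 1) = t - α := by field_simp
    nlinarith
lemma aux_f_anti {α : ℝ} (hα : 0 < α) {t s : ℝ} (hat : α ≤ t) (hts : t ≤ s) :
    s ^ α * Real.exp (-s) ≤ t ^ α * Real.exp (-t) := by
  have ht : 0 < t := lt_of_lt_of_le hα hat
  have hs : 0 < s := lt_of_lt_of_le ht hts
  rw [Real.rpow_def_of_pos hs, Real.rpow_def_of_pos ht, ← Real.exp_add, ← Real.exp_add,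
    Real.exp_le_exp]
  have hlog : Real.log (s / t) ≤ s / t - 1 := Real.log_le_sub_one_of_pos (by positivity)
  have h2 : Real.log s - Real.log t ≤ s / t - 1 := by rwa [← Real.log_div hs.ne' ht.ne']
  have h3 : α * (s / t - 1) ≤ s - t := by
    have : α * (s / t - 1) = α * (s - t) / t := by field_simp
    rw [this, div_le_iff₀ ht]
    nlinarith
  have h4 : α * (Real.log s - Real.log t) ≤ α * (s / t - 1) := mul_le_mul_of_nonneg_left h2 hα.le
  nlinarith

lemma aux_bound {α : ℝ} {θ : ℕ → ℝ} (hθ0 : ∀ k, 0 ≤ θ k)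
    (hθ : Tendsto (fun k : ℕ => θ k / (k : ℝ) ^ α) atTop (𝓝 1)) :
    ∃ C : ℝ, 1 ≤ C ∧ ∀ k : ℕ, θ k / (k : ℝ) ^ α ≤ C := by
  have h2 : ∀ᶠ k : ℕ in atTop, θ k / (k : ℝ) ^ α ≤ 2 :=
    hθ.eventually (eventually_le_nhds (by norm_num))
  obtain ⟨N, hN⟩ := eventually_atTop.1 h2
  have hnn : ∀ k : ℕ, 0 ≤ θ k / (k : ℝ) ^ α := fun k => div_nonneg (hθ0 k) (by positivity)
  have hsum0 : (0:ℝ) ≤ ∑ j ∈ Finset.range N, θ j / (j : ℝ) ^ α :=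
    Finset.sum_nonneg fun j _ => hnn j
  refine ⟨2 + ∑ j ∈ Finset.range N, θ j / (j : ℝ) ^ α, by linarith, fun k => ?_⟩
  rcases le_or_gt N k with h | h
  · have := hN k h
    have : (0:ℝ) ≤ ∑ j ∈ Finset.range N, θ j / (j : ℝ) ^ α :=
      Finset.sum_nonneg fun j _ => hnn j
    linarith [hN k h]
  · have : θ k / (k : ℝ) ^ α ≤ ∑ j ∈ Finset.range N, θ j / (j : ℝ) ^ α :=
      Finset.single_le_sum (fun j _ => hnn j) (Finset.mem_range.2 h)
    linarith

lemma aux_summable {α : ℝ} (hα : 0 < α) {θ : ℕ → ℝ} (hθ0 : ∀ k, 0 ≤ θ k)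
    {C : ℝ} (hC : ∀ k : ℕ, θ k / (k : ℝ) ^ α ≤ C) {v : ℝ} (hv : 0 < v) :
    Summable (fun k : ℕ => θ (k + 1) * Real.exp (-((k : ℝ) + 1) * v)) := by
  set m := ⌈α⌉₊
  have hgeom : Summable (fun k : ℕ => C * ((k : ℝ) ^ m * Real.exp (-v) ^ k)) := by
    refine Summable.mul_left C (summable_pow_mul_geometric_of_norm_lt_one m ?_)
    rw [Real.norm_eq_abs, abs_of_pos (Real.exp_pos _)]
    exact Real.exp_lt_one_iff.2 (by linarith)
  have hgeom' : Summable (fun k : ℕ => C * (((k : ℝ) + 1) ^ m * Real.exp (-v) ^ (k + 1))) := by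
    have := (summable_nat_add_iff (f := fun k : ℕ => C * ((k : ℝ) ^ m * Real.exp (-v) ^ k)) 1).2 hgeom
    refine this.congr fun k => ?_
    push_cast
    ring
  refine Summable.of_nonneg_of_le (fun k => mul_nonneg (hθ0 _) (Real.exp_pos _).le) (fun k => ?_) hgeom'
  have hk1 : (0:ℝ) < (k : ℝ) + 1 := by positivity
  have hθle : θ (k + 1) ≤ C * ((k : ℝ) + 1) ^ α := by
    have := hC (k + 1)
    rw [div_le_iff₀ (by positivity : (0:ℝ) < ((k+1 : ℕ) : ℝ) ^ α)] at this
    push_cast at this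
    linarith [this]
  have hpow : ((k : ℝ) + 1) ^ α ≤ ((k : ℝ) + 1) ^ (m : ℝ) :=
    Real.rpow_le_rpow_of_exponent_le (by linarith) (Nat.le_ceil α)
  have hexp : Real.exp (-((k : ℝ) + 1) * v) = Real.exp (-v) ^ (k + 1) := by
    rw [← Real.exp_nat_mul]
    congr 1
    push_cast
    ring
  calc θ (k + 1) * Real.exp (-((k : ℝ) + 1) * v)
      ≤ C * ((k : ℝ) + 1) ^ α * Real.exp (-((k : ℝ) + 1) * v) := by
        exact mul_le_mul_of_nonneg_right hθle (Real.exp_pos _).le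
    _ ≤ C * ((k : ℝ) + 1) ^ (m : ℝ) * Real.exp (-((k : ℝ) + 1) * v) := by
        have hC0 : 0 ≤ C := le_trans (div_nonneg (hθ0 1) (by positivity)) (hC 1)
        exact mul_le_mul_of_nonneg_right (mul_le_mul_of_nonneg_left hpow hC0) (Real.exp_pos _).le
    _ = C * (((k : ℝ) + 1) ^ m * Real.exp (-v) ^ (k + 1)) := by
        rw [hexp, Real.rpow_natCast]
        ring

noncomputable def Gfun (α : ℝ) (θ : ℕ → ℝ) (v t : ℝ) : ℝ :=
  (θ ⌈t / v⌉₊ / ((⌈t / v⌉₊ : ℝ)) ^ α) *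
    (((⌈t / v⌉₊ : ℝ) * v) ^ α * Real.exp (-((⌈t / v⌉₊ : ℝ) * v)))

lemma Gfun_measurable (α : ℝ) (θ : ℕ → ℝ) {v : ℝ} (hv : 0 < v) :
    Measurable (Gfun α θ v) := by
  have hceil : Measurable (fun t : ℝ => ⌈t / v⌉₊) := by
    apply measurable_to_countable'
    intro n
    rcases Nat.eq_zero_or_pos n with rfl | hn
    · have : (fun t : ℝ => ⌈t / v⌉₊) ⁻¹' {0} = Iic 0 := by
        ext t
        simp only [mem_preimage, mem_singleton_iff, Nat.ceil_eq_zero, mem_Iic]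
        rw [div_nonpos_iff]
        constructor
        · intro h
          rcases h with ⟨h1, h2⟩ | ⟨h1, h2⟩
          · linarith
          · exact h1
        · intro h; right; exact ⟨h, hv.le⟩
      rw [this]; exact measurableSet_Iic
    · have : (fun t : ℝ => ⌈t / v⌉₊) ⁻¹' {n} = Ioc (((n : ℝ) - 1) * v) ((n : ℝ) * v) := by
        ext t
        simp only [mem_preimage, mem_singleton_iff, mem_Ioc]
        rw [Nat.ceil_eq_iff hn.ne']
        constructor
        · rintro ⟨h1, h2⟩
          constructor
          · rw [← lt_div_iff₀ hv]
            calc ((n:ℝ) - 1) = ((n - 1 : ℕ) : ℝ) := by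
                  rw [Nat.cast_sub hn]; norm_num
              _ < t / v := h1
          · rw [← div_le_iff₀ hv] at *; exact h2
        · rintro ⟨h1, h2⟩
          constructor
          · rw [Nat.cast_sub hn]
            push_cast
            rw [lt_div_iff₀ hv]
            linarith
          · rw [div_le_iff₀ hv]; linarith
      rw [this]; exact measurableSet_Ioc
  exact (measurable_from_nat (f := fun c : ℕ =>
    (θ c / ((c : ℝ)) ^ α) * (((c : ℝ) * v) ^ α * Real.exp (-((c : ℝ) * v))))).comp hceil

lemma Gfun_nonneg {α : ℝ} {θ : ℕ → ℝ} (hθ0 : ∀ k, 0 ≤ θ k) {v : ℝ} (hv : 0 ≤ v) (t : ℝ) :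
    0 ≤ Gfun α θ v t := by
  unfold Gfun
  have h1 : 0 ≤ θ ⌈t / v⌉₊ / ((⌈t / v⌉₊ : ℝ)) ^ α := div_nonneg (hθ0 _) (by positivity)
  have h2 : (0:ℝ) ≤ (⌈t / v⌉₊ : ℝ) * v := mul_nonneg (Nat.cast_nonneg _) hv
  have h3 : (0:ℝ) ≤ ((⌈t / v⌉₊ : ℝ) * v) ^ α := Real.rpow_nonneg h2 α
  positivity

lemma Gfun_bound {α : ℝ} (hα : 0 < α) {θ : ℕ → ℝ} (hθ0 : ∀ k, 0 ≤ θ k)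
    {C : ℝ} (hC1 : 1 ≤ C) (hC : ∀ k : ℕ, θ k / (k : ℝ) ^ α ≤ C)
    {v t : ℝ} (hv : 0 < v) (ht : 0 < t) :
    ‖Gfun α θ v t‖ ≤ C * (α ^ α * Real.exp (-α) * Real.exp α) * Real.exp (-t)
      + C * (t ^ α * Real.exp (-t)) := by
  have hC0 : (0:ℝ) ≤ C := by linarith
  set c := ⌈t / v⌉₊ with hc
  have hKv : t ≤ (c : ℝ) * v := by
    rw [← div_le_iff₀ hv]; exact Nat.le_ceil _
  have hKv0 : (0:ℝ) ≤ (c : ℝ) * v := le_trans ht.le hKv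
  have hr : θ c / ((c : ℝ)) ^ α ≤ C := hC c
  have hr0 : 0 ≤ θ c / ((c : ℝ)) ^ α := div_nonneg (hθ0 _) (by positivity)
  have hf0 : 0 ≤ ((c : ℝ) * v) ^ α * Real.exp (-((c : ℝ) * v)) := by positivity
  rw [Real.norm_eq_abs, abs_of_nonneg (Gfun_nonneg hθ0 hv.le t)]
  unfold Gfun
  rw [← hc]
  have hstep : (θ c / ((c : ℝ)) ^ α) * (((c : ℝ) * v) ^ α * Real.exp (-((c : ℝ) * v)))
      ≤ C * (((c : ℝ) * v) ^ α * Real.exp (-((c : ℝ) * v))) :=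
    mul_le_mul_of_nonneg_right hr hf0
  rcases le_or_gt α t with h | h
  · have hfa : ((c : ℝ) * v) ^ α * Real.exp (-((c : ℝ) * v)) ≤ t ^ α * Real.exp (-t) :=
      aux_f_anti hα h hKv
    have : (0:ℝ) ≤ C * (α ^ α * Real.exp (-α) * Real.exp α) * Real.exp (-t) := by positivity
    nlinarith [mul_le_mul_of_nonneg_left hfa hC0]
  · have hfa : ((c : ℝ) * v) ^ α * Real.exp (-((c : ℝ) * v)) ≤ α ^ α * Real.exp (-α) :=
      aux_f_max hα hKv0
    have h1 : Real.exp α * Real.exp (-t) = Real.exp (α - t) := by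
      rw [← Real.exp_add]; ring_nf
    have h2 : (1:ℝ) ≤ Real.exp α * Real.exp (-t) := by
      rw [h1]; exact Real.one_le_exp (by linarith)
    have h3 : C * (α ^ α * Real.exp (-α) * Real.exp α) * Real.exp (-t)
        = (C * (α ^ α * Real.exp (-α))) * (Real.exp α * Real.exp (-t)) := by ring
    have h4 : C * (α ^ α * Real.exp (-α)) ≤ (C * (α ^ α * Real.exp (-α))) * (Real.exp α * Real.exp (-t)) :=
      le_mul_of_one_le_right (by positivity) h2
    have h5 : (0:ℝ) ≤ C * (t ^ α * Real.exp (-t)) := by positivity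
    nlinarith [mul_le_mul_of_nonneg_left hfa hC0]

lemma aux_D_integrable {α : ℝ} (hα : 0 < α) (C : ℝ) :
    IntegrableOn (fun t : ℝ => C * (α ^ α * Real.exp (-α) * Real.exp α) * Real.exp (-t)
      + C * (t ^ α * Real.exp (-t))) (Ioi 0) := by
  have i1 : IntegrableOn (fun t : ℝ => Real.exp (-t)) (Ioi 0) := by
    have := exp_neg_integrableOn_Ioi 0 (by norm_num : (0:ℝ) < 1)
    refine this.congr_fun (fun t _ => by norm_num) measurableSet_Ioi
  have i2 : IntegrableOn (fun t : ℝ => t ^ α * Real.exp (-t)) (Ioi 0) := by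
    have := Real.GammaIntegral_convergent (by linarith : (0:ℝ) < α + 1)
    refine this.congr_fun (fun t _ => ?_) measurableSet_Ioi
    rw [add_sub_cancel_right]
    ring
  exact (i1.const_mul _).add (i2.const_mul _)

lemma Gfun_integrableOn {α : ℝ} (hα : 0 < α) {θ : ℕ → ℝ} (hθ0 : ∀ k, 0 ≤ θ k)
    {C : ℝ} (hC1 : 1 ≤ C) (hC : ∀ k : ℕ, θ k / (k : ℝ) ^ α ≤ C)
    {v : ℝ} (hv : 0 < v) : IntegrableOn (Gfun α θ v) (Ioi 0) := by
  refine Integrable.mono' (aux_D_integrable hα C)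
    ((Gfun_measurable α θ hv).aestronglyMeasurable.restrict) ?_
  rw [ae_restrict_iff' measurableSet_Ioi]
  exact ae_of_all _ fun t ht => Gfun_bound hα hθ0 hC1 hC hv ht

lemma Gfun_integral_eq {α : ℝ} (hα : 0 < α) {θ : ℕ → ℝ} (hθ0 : ∀ k, 0 ≤ θ k)
    {C : ℝ} (hC1 : 1 ≤ C) (hC : ∀ k : ℕ, θ k / (k : ℝ) ^ α ≤ C)
    {v : ℝ} (hv : 0 < v) :
    ∫ t in Ioi (0:ℝ), Gfun α θ v t
      = v ^ (1 + α) * ∑' k : ℕ, θ (k + 1) * Real.exp (-((k : ℝ) + 1) * v) := by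
  set s : ℕ → Set ℝ := fun k => Ioc ((k : ℝ) * v) (((k : ℝ) + 1) * v) with hs
  have hmeas : ∀ k, MeasurableSet (s k) := fun k => measurableSet_Ioc
  have hdisj : Pairwise (Function.onFun Disjoint s) := by
    intro i j hij
    simp only [Function.onFun, hs, Set.Ioc_disjoint_Ioc]
    rcases hij.lt_or_gt with h | h
    · refine le_trans (le_trans inf_le_left ?_) le_sup_right
      have : (i : ℝ) + 1 ≤ (j : ℝ) := by exact_mod_cast h
      nlinarith
    · refine le_trans (le_trans inf_le_right ?_) le_sup_left
      have : (j : ℝ) + 1 ≤ (i : ℝ) := by exact_mod_cast h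
      nlinarith
  have hunion : (⋃ k, s k) = Ioi (0:ℝ) := by
    ext t
    simp only [mem_iUnion, hs, mem_Ioc, mem_Ioi]
    constructor
    · rintro ⟨k, h1, h2⟩
      have : (0:ℝ) ≤ (k : ℝ) * v := by positivity
      linarith
    · intro ht
      have htv : 0 < t / v := div_pos ht hv
      have hc1 : 1 ≤ ⌈t / v⌉₊ := Nat.one_le_ceil_iff.2 htv
      refine ⟨⌈t / v⌉₊ - 1, ?_, ?_⟩
      · have h1 : ((⌈t / v⌉₊ : ℝ)) < t / v + 1 := Nat.ceil_lt_add_one htv.le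
        have hcast : ((⌈t / v⌉₊ - 1 : ℕ) : ℝ) = (⌈t / v⌉₊ : ℝ) - 1 := by
          rw [Nat.cast_sub hc1]; norm_num
        rw [hcast, ← lt_div_iff₀ hv] at *
        linarith
      · have hcast : ((⌈t / v⌉₊ - 1 : ℕ) : ℝ) + 1 = (⌈t / v⌉₊ : ℝ) := by
          rw [Nat.cast_sub hc1]; norm_num
        rw [hcast, ← div_le_iff₀ hv]
        exact Nat.le_ceil _
  have hint : IntegrableOn (Gfun α θ v) (⋃ k, s k) := by
    rw [hunion]; exact Gfun_integrableOn hα hθ0 hC1 hC hv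
  have h1 : ∫ t in Ioi (0:ℝ), Gfun α θ v t = ∑' k : ℕ, ∫ t in s k, Gfun α θ v t := by
    rw [← hunion]
    exact MeasureTheory.integral_iUnion hmeas hdisj hint
  have h2 : ∀ k : ℕ, ∫ t in s k, Gfun α θ v t
      = v ^ (1 + α) * (θ (k + 1) * Real.exp (-((k : ℝ) + 1) * v)) := by
    intro k
    have hceil : ∀ t ∈ s k, ⌈t / v⌉₊ = k + 1 := by
      intro t ht
      simp only [hs, mem_Ioc] at ht
      rw [Nat.ceil_eq_iff (Nat.succ_ne_zero k)]
      constructor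
      · have : ((k + 1 - 1 : ℕ) : ℝ) = (k : ℝ) := by norm_num
        rw [this, lt_div_iff₀ hv]
        exact ht.1
      · rw [div_le_iff₀ hv]
        push_cast
        exact ht.2
    have hconst : ∫ t in s k, Gfun α θ v t
        = ∫ _ in s k, (θ (k+1) / (((k:ℝ)+1)) ^ α) *
            ((((k:ℝ)+1) * v) ^ α * Real.exp (-(((k:ℝ)+1) * v))) := by
      refine setIntegral_congr_fun (hmeas k) fun t ht => ?_
      unfold Gfun
      rw [hceil t ht]
      push_cast
      ring_nf
    rw [hconst, setIntegral_const]
    simp only [hs, measureReal_def, Real.volume_Ioc]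
    have hvol : (((k : ℝ) + 1) * v - (k : ℝ) * v) = v := by ring
    rw [hvol, ENNReal.toReal_ofReal hv.le, smul_eq_mul]
    have hK : (0:ℝ) < (k : ℝ) + 1 := by positivity
    have hKα : (0:ℝ) < ((k:ℝ)+1) ^ α := Real.rpow_pos_of_pos hK α
    have hmulr : (((k:ℝ)+1) * v) ^ α = ((k:ℝ)+1) ^ α * v ^ α :=
      Real.mul_rpow hK.le hv.le
    have hvpow : v ^ (1 + α) = v * v ^ α := by
      rw [Real.rpow_add hv, Real.rpow_one]
    rw [hmulr, hvpow]
    have hexp : Real.exp (-(((k:ℝ)+1) * v)) = Real.exp (-((k:ℝ)+1) * v) := by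
      rw [neg_mul]
    rw [hexp]
    field_simp
  rw [h1]
  rw [tsum_congr h2]
  exact tsum_mul_left
lemma aux_L2 {α : ℝ} (hα : 0 < α) {θ : ℕ → ℝ} (hθ0 : ∀ k, 0 ≤ θ k)
    (hθ : Tendsto (fun k : ℕ => θ k / (k : ℝ) ^ α) atTop (𝓝 1)) :
    Tendsto (fun v : ℝ => v ^ (1 + α) * ∑' k : ℕ, θ (k + 1) * Real.exp (-((k : ℝ) + 1) * v))
      (𝓝[>] (0:ℝ)) (𝓝 (Real.Gamma (α + 1))) := by
  obtain ⟨C, hC1, hC⟩ := aux_bound hθ0 hθ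
  have hΓ : Real.Gamma (α + 1) = ∫ t in Ioi (0:ℝ), t ^ α * Real.exp (-t) := by
    rw [Real.Gamma_eq_integral (by linarith : (0:ℝ) < α + 1)]
    refine setIntegral_congr_fun measurableSet_Ioi fun t _ => ?_
    rw [add_sub_cancel_right]
    ring
  rw [tendsto_iff_seq_tendsto]
  intro u hu
  have humem : ∀ᶠ n in atTop, u n ∈ Ioi (0:ℝ) := hu.eventually_mem self_mem_nhdsWithin
  obtain ⟨N, hN⟩ := eventually_atTop.1 humem
  rw [← tendsto_add_atTop_iff_nat N]
  set w : ℕ → ℝ := fun n => u (n + N) with hw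
  have hw0 : ∀ n, 0 < w n := fun n => hN (n + N) (Nat.le_add_left N n)
  have hwt : Tendsto w atTop (𝓝[>] 0) := hu.comp (tendsto_add_atTop_nat N)
  have hwt0 : Tendsto w atTop (𝓝 0) := hwt.mono_right nhdsWithin_le_nhds
  have key : Tendsto (fun n => ∫ t in Ioi (0:ℝ), Gfun α θ (w n) t) atTop
      (𝓝 (∫ t in Ioi (0:ℝ), t ^ α * Real.exp (-t))) := by
    refine MeasureTheory.tendsto_integral_of_dominated_convergence
      (fun t => C * (α ^ α * Real.exp (-α) * Real.exp α) * Real.exp (-t)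
        + C * (t ^ α * Real.exp (-t)))
      (fun n => (Gfun_measurable α θ (hw0 n)).aestronglyMeasurable.restrict)
      (aux_D_integrable hα C) (fun n => ?_) ?_
    · rw [ae_restrict_iff' measurableSet_Ioi]
      exact ae_of_all _ fun t ht => Gfun_bound hα hθ0 hC1 hC (hw0 n) ht
    · rw [ae_restrict_iff' measurableSet_Ioi]
      refine ae_of_all _ fun t ht => ?_
      -- pointwise convergence
      set c : ℕ → ℕ := fun n => ⌈t / w n⌉₊ with hcdef
      have hdiv : Tendsto (fun n => t / w n) atTop atTop := by
        have hinv : Tendsto (fun n => (w n)⁻¹) atTop atTop :=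
          Filter.Tendsto.inv_tendsto_nhdsGT_zero hwt
        have := hinv.const_mul_atTop ht
        refine this.congr fun n => ?_
        rw [div_eq_mul_inv]
      have hcat : Tendsto c atTop atTop := by
        rw [← tendsto_natCast_atTop_iff (R := ℝ)]
        exact tendsto_atTop_mono (fun n => Nat.le_ceil _) hdiv
      have hr : Tendsto (fun n => θ (c n) / ((c n : ℝ)) ^ α) atTop (𝓝 1) := hθ.comp hcat
      have hlow : ∀ n, t ≤ (c n : ℝ) * w n := fun n => by
        rw [← div_le_iff₀ (hw0 n)]; exact Nat.le_ceil _
      have hhigh : ∀ n, (c n : ℝ) * w n ≤ t + w n := fun n => by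
        have h1 : ((c n : ℝ)) < t / w n + 1 := Nat.ceil_lt_add_one (le_of_lt (div_pos ht (hw0 n)))
        have h2 : (c n : ℝ) * w n < (t / w n + 1) * w n :=
          mul_lt_mul_of_pos_right h1 (hw0 n)
        have h3 : (t / w n + 1) * w n = t + w n := by rw [add_mul, div_mul_cancel₀ _ (hw0 n).ne', one_mul]
        linarith
      have hcw : Tendsto (fun n => (c n : ℝ) * w n) atTop (𝓝 t) := by
        refine tendsto_of_tendsto_of_tendsto_of_le_of_le' tendsto_const_nhds ?_
          (Eventually.of_forall hlow) (Eventually.of_forall hhigh)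
        have : Tendsto (fun n => t + w n) atTop (𝓝 (t + 0)) := tendsto_const_nhds.add hwt0
        simpa using this
      have hf : Tendsto (fun n => ((c n : ℝ) * w n) ^ α * Real.exp (-((c n : ℝ) * w n)))
          atTop (𝓝 (t ^ α * Real.exp (-t))) := by
        refine Tendsto.mul (hcw.rpow_const (Or.inl (ne_of_gt ht))) ?_
        exact (Real.continuous_exp.tendsto _).comp hcw.neg
      have := hr.mul hf
      rw [one_mul] at this
      exact this
  rw [hΓ]
  refine key.congr fun n => ?_
  exact Gfun_integral_eq hα hθ0 hC1 hC (hw0 n)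


/-- For `θ_k ~ k^α` with `α > 0`: for every `n` large enough the equation
`∑_{k=1}^∞ θ_k e^{-k v} = n` has a unique solution `v = v_n > 0`, and any such
solution satisfies `v_n ~ (n / Γ(α+1))^{-1/(1+α)}` as `n → ∞`. -/
theorem saddle_point_equation_solution
    (α : ℝ) (hα : 0 < α)
    (θ : ℕ → ℝ) (hθ0 : ∀ k, 0 ≤ θ k)
    (hθ : Tendsto (fun k : ℕ => θ k / (k : ℝ) ^ α) atTop (𝓝 1)) :
    (∀ᶠ n : ℕ in atTop, ∃! w : ℝ, 0 < w ∧
        (∑' k : ℕ, θ (k + 1) * Real.exp (-((k : ℝ) + 1) * w)) = n) ∧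
      ∀ v : ℕ → ℝ,
        (∀ᶠ n : ℕ in atTop, 0 < v n ∧
          (∑' k : ℕ, θ (k + 1) * Real.exp (-((k : ℝ) + 1) * v n)) = n) →
        Tendsto (fun n : ℕ => v n * ((n : ℝ) / Real.Gamma (α + 1)) ^ ((1 : ℝ) / (1 + α)))
          atTop (𝓝 1) := by
  obtain ⟨C, hC1, hC⟩ := aux_bound hθ0 hθ
  set S : ℝ → ℝ := fun v => ∑' k : ℕ, θ (k + 1) * Real.exp (-((k : ℝ) + 1) * v) with hSdef
  have hsum : ∀ {v : ℝ}, 0 < v →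
      Summable (fun k : ℕ => θ (k + 1) * Real.exp (-((k : ℝ) + 1) * v)) :=
    fun hv => aux_summable hα hθ0 hC hv
  -- positivity of some coefficient
  obtain ⟨j, hj⟩ : ∃ j : ℕ, 0 < θ (j + 1) := by
    have : ∀ᶠ k : ℕ in atTop, (1:ℝ)/2 < θ k / (k : ℝ) ^ α :=
      hθ.eventually (eventually_gt_nhds (by norm_num))
    obtain ⟨M, hM⟩ := eventually_atTop.1 this
    refine ⟨M, ?_⟩
    have h1 := hM (M + 1) (Nat.le_succ M)
    by_contra h
    push_neg at h
    have : θ (M + 1) = 0 := le_antisymm h (hθ0 _)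
    rw [this, zero_div] at h1
    norm_num at h1
  have hSanti : StrictAntiOn S (Ioi 0) := by
    intro a ha b hb hab
    refine Summable.tsum_lt_tsum (i := j) (fun k => ?_) ?_ (hsum hb) (hsum ha)
    · refine mul_le_mul_of_nonneg_left (Real.exp_le_exp.2 ?_) (hθ0 _)
      have hk : (0:ℝ) ≤ (k : ℝ) := Nat.cast_nonneg k
      nlinarith [le_of_lt hab]
    · refine mul_lt_mul_of_pos_left (Real.exp_lt_exp.2 ?_) hj
      have hk : (0:ℝ) ≤ (j : ℝ) := Nat.cast_nonneg j
      nlinarith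
  have hScont : ∀ {a : ℝ}, 0 < a → ContinuousOn S (Ici a) := by
    intro a ha
    refine continuousOn_tsum (fun k => Continuous.continuousOn (by continuity))
      (hsum ha) fun k x hx => ?_
    rw [Real.norm_eq_abs, abs_of_nonneg (mul_nonneg (hθ0 _) (Real.exp_pos _).le)]
    refine mul_le_mul_of_nonneg_left (Real.exp_le_exp.2 ?_) (hθ0 _)
    have hk : (0:ℝ) ≤ (k : ℝ) := Nat.cast_nonneg k
    have hx' : a ≤ x := hx
    nlinarith
  have hL2 := aux_L2 hα hθ0 hθ
  have hΓpos : 0 < Real.Gamma (α + 1) := Real.Gamma_pos_of_pos (by linarith)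
  have hSatTop : Tendsto S (𝓝[>] (0:ℝ)) atTop := by
    have hpow : Tendsto (fun v : ℝ => v ^ (1 + α)) (𝓝[>] 0) (𝓝[>] 0) := by
      rw [tendsto_nhdsWithin_iff]
      constructor
      · have h0 := (Real.continuousAt_rpow_const 0 (1 + α) (Or.inr (by linarith))).tendsto
        rw [Real.zero_rpow (by linarith : (1:ℝ) + α ≠ 0)] at h0
        exact h0.mono_left nhdsWithin_le_nhds
      · filter_upwards [self_mem_nhdsWithin] with v hv
        exact Real.rpow_pos_of_pos hv _
    have hinv : Tendsto (fun v : ℝ => (v ^ (1 + α))⁻¹) (𝓝[>] (0:ℝ)) atTop :=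
      Filter.Tendsto.inv_tendsto_nhdsGT_zero hpow
    have hmul := Filter.Tendsto.pos_mul_atTop hΓpos hL2 hinv
    refine hmul.congr' ?_
    filter_upwards [self_mem_nhdsWithin] with v hv
    have hne : (v:ℝ) ^ (1 + α) ≠ 0 := (Real.rpow_pos_of_pos hv _).ne'
    show (v ^ (1 + α) * S v) * (v ^ (1 + α))⁻¹ = S v
    rw [mul_comm (v ^ (1 + α)) (S v), mul_assoc, mul_inv_cancel₀ hne, mul_one]
  constructor
  · filter_upwards [eventually_ge_atTop 1] with n hn
    have hn1 : (1:ℝ) ≤ (n:ℝ) := by exact_mod_cast hn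
    have hS1 : 0 ≤ S 1 := tsum_nonneg fun k => mul_nonneg (hθ0 _) (Real.exp_pos _).le
    set b : ℝ := 1 + S 1 with hbdef
    have hbpos : 0 < b := by simp only [hbdef]; linarith
    have hSb : S b < 1 := by
      have hterm : ∀ k : ℕ, θ (k + 1) * Real.exp (-((k : ℝ) + 1) * b)
          ≤ Real.exp (-(S 1)) * (θ (k + 1) * Real.exp (-((k : ℝ) + 1) * 1)) := by
        intro k
        have hk : (0:ℝ) ≤ (k : ℝ) := Nat.cast_nonneg k
        have hexp : Real.exp (-((k : ℝ) + 1) * b)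
            ≤ Real.exp (-(S 1)) * Real.exp (-((k : ℝ) + 1) * 1) := by
          rw [← Real.exp_add]
          refine Real.exp_le_exp.2 ?_
          simp only [hbdef]
          nlinarith
        calc θ (k + 1) * Real.exp (-((k : ℝ) + 1) * b)
            ≤ θ (k + 1) * (Real.exp (-(S 1)) * Real.exp (-((k : ℝ) + 1) * 1)) :=
              mul_le_mul_of_nonneg_left hexp (hθ0 _)
          _ = Real.exp (-(S 1)) * (θ (k + 1) * Real.exp (-((k : ℝ) + 1) * 1)) := by ring
      have h1 := Summable.tsum_le_tsum hterm (hsum hbpos) ((hsum one_pos).mul_left (Real.exp (-(S 1))))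
      have h2 : ∑' k : ℕ, Real.exp (-(S 1)) * (θ (k + 1) * Real.exp (-((k : ℝ) + 1) * 1))
          = Real.exp (-(S 1)) * S 1 := tsum_mul_left
      have h3 : Real.exp (-(S 1)) * S 1 < 1 := by
        have h4 := Real.add_one_le_exp (S 1)
        have h5 := Real.exp_pos (S 1)
        rw [Real.exp_neg, inv_mul_lt_iff₀ h5]
        nlinarith
      calc S b ≤ Real.exp (-(S 1)) * S 1 := by rw [← h2]; exact h1
        _ < 1 := h3
    have ha' : ∀ᶠ x in 𝓝[>] (0:ℝ), (n:ℝ) < S x :=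
      hSatTop.eventually (eventually_gt_atTop (n:ℝ))
    obtain ⟨a, haS, ha0⟩ := (ha'.and eventually_mem_nhdsWithin).exists
    have hab : a < b := by
      rcases lt_or_ge a b with h | h
      · exact h
      · exfalso
        rcases eq_or_lt_of_le h with heq | hlt
        · rw [heq] at hSb; linarith
        · have := hSanti (mem_Ioi.2 hbpos) ha0 hlt
          linarith
    have hmem : (n:ℝ) ∈ Icc (S b) (S a) := ⟨by linarith, haS.le⟩
    obtain ⟨w, hw, hSw⟩ := intermediate_value_Icc' hab.le
      ((hScont ha0).mono fun x hx => mem_Ici.2 hx.1) hmem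
    have hw0 : 0 < w := lt_of_lt_of_le ha0 hw.1
    refine ⟨w, ⟨hw0, hSw⟩, ?_⟩
    rintro w' ⟨hw'0, hw'⟩
    exact hSanti.injOn (mem_Ioi.2 hw'0) (mem_Ioi.2 hw0) (hw'.trans hSw.symm)
  · intro v hv
    have hv0 : ∀ᶠ n in atTop, 0 < v n := hv.mono fun n h => h.1
    have htend0 : Tendsto v atTop (𝓝 0) := by
      rw [tendsto_order]
      constructor
      · intro c hc
        filter_upwards [hv0] with n h
        linarith
      · intro c hc
        have hcast : Tendsto (fun n : ℕ => (n:ℝ)) atTop atTop := tendsto_natCast_atTop_atTop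
        filter_upwards [hv, hcast.eventually (eventually_gt_atTop (S c))] with n hn hSc
        by_contra h
        push_neg at h
        have hle : S (v n) ≤ S c := by
          rcases eq_or_lt_of_le h with heq | hlt
          · rw [← heq]
          · exact (hSanti (mem_Ioi.2 hc) (mem_Ioi.2 (lt_of_lt_of_le hc h)) hlt).le
        have : S (v n) = (n:ℝ) := hn.2
        rw [this] at hle
        linarith
    have hvin : Tendsto v atTop (𝓝[>] (0:ℝ)) := tendsto_nhdsWithin_iff.2 ⟨htend0, hv0⟩
    have hA : Tendsto (fun n => (v n) ^ (1 + α) * S (v n)) atTop (𝓝 (Real.Gamma (α + 1))) :=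
      hL2.comp hvin
    have hA' : Tendsto (fun n => (v n) ^ (1 + α) * (n:ℝ)) atTop (𝓝 (Real.Gamma (α + 1))) := by
      refine hA.congr' ?_
      filter_upwards [hv] with n hn
      show (v n) ^ (1 + α) * S (v n) = (v n) ^ (1 + α) * (n:ℝ)
      rw [show S (v n) = (n:ℝ) from hn.2]
    have hB : Tendsto (fun n => (v n) ^ (1 + α) * (n:ℝ) / Real.Gamma (α + 1)) atTop (𝓝 1) := by
      have := hA'.div_const (Real.Gamma (α + 1))
      rwa [div_self hΓpos.ne'] at this
    have hBp := hB.rpow_const (p := 1 / (1 + α)) (Or.inl one_ne_zero)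
    rw [Real.one_rpow] at hBp
    refine hBp.congr' ?_
    filter_upwards [hv0] with n hn
    have h1 : (v n) ^ (1 + α) * (n:ℝ) / Real.Gamma (α + 1)
        = (v n) ^ (1 + α) * ((n:ℝ) / Real.Gamma (α + 1)) := by ring
    rw [h1, Real.mul_rpow (Real.rpow_nonneg hn.le _)
      (div_nonneg (Nat.cast_nonneg n) hΓpos.le)]
    congr 1
    rw [← Real.rpow_mul hn.le, mul_one_div, div_self (by linarith : (1:ℝ) + α ≠ 0),
      Real.rpow_one]
end
end

section
/- Fix y > 0 and set x_n = n*(ℓ_n − log y). Then ∑_{k ≥ x_n} (θ_k/k) e^{−k v_n} → y as n → ∞; in particular, in the special case θ_k = k^α, ∑_{k ≥ x_n} k^{α−1} e^{−k v_n} → y. -/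
open Filter Real
open scoped Topology

noncomputable section

/-- `n* = 1/v_n`. -/
def nstar (v : ℕ → ℝ) (n : ℕ) : ℝ := (v n)⁻¹

/-- `ℓ_n = α log (n*) + (α-1) log (α log (n*))`. -/
def elln (α : ℝ) (v : ℕ → ℝ) (n : ℕ) : ℝ :=
  α * Real.log (nstar v n) + (α - 1) * Real.log (α * Real.log (nstar v n))

def Lq (α : ℝ) (v : ℕ → ℝ) (n : ℕ) : ℝ := α * Real.log (nstar v n)
def zq (α : ℝ) (v : ℕ → ℝ) (y : ℝ) (n : ℕ) : ℝ := elln α v n - Real.log y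
def xq (α : ℝ) (v : ℕ → ℝ) (y : ℝ) (n : ℕ) : ℝ := nstar v n * zq α v y n
def mq (α : ℝ) (v : ℕ → ℝ) (y : ℝ) (n : ℕ) : ℕ := ⌈xq α v y n⌉₊
def wq (α : ℝ) (v : ℕ → ℝ) (y : ℝ) (c : ℝ) (n : ℕ) : ℝ := v n - c / (mq α v y n : ℝ)

lemma theta_le_two {α : ℝ} {θ : ℕ → ℝ}
    (hθ : Tendsto (fun k : ℕ => θ k / (k : ℝ) ^ α) atTop (𝓝 1)) :
    ∃ K : ℕ, 1 ≤ K ∧ ∀ k ≥ K, θ k ≤ 2 * (k : ℝ) ^ α := by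
  have h2 : ∀ᶠ k : ℕ in atTop, θ k / (k : ℝ) ^ α ≤ 2 :=
    hθ.eventually_le_const (by norm_num)
  obtain ⟨K, hK⟩ := (h2.and (eventually_ge_atTop 1)).exists_forall_of_atTop
  exact ⟨max K 1, le_max_right _ _, fun k hk => by
    have hk1 : 1 ≤ k := le_trans (le_max_right K 1) hk
    have := hK k (le_trans (le_max_left K 1) hk)
    have hkpos : (0:ℝ) < (k:ℝ) ^ α := by
      apply Real.rpow_pos_of_pos; exact_mod_cast Nat.lt_of_lt_of_le Nat.zero_lt_one hk1
    calc θ k = θ k / (k:ℝ)^α * (k:ℝ)^α := by field_simp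
    _ ≤ 2 * (k:ℝ)^α := by nlinarith [this.1]⟩

set_option maxHeartbeats 2000000 in
lemma summable_theta_exp {α : ℝ} (hα : 0 < α) {θ : ℕ → ℝ} (hθ0 : ∀ k, 0 ≤ θ k)
    (hθ : Tendsto (fun k : ℕ => θ k / (k : ℝ) ^ α) atTop (𝓝 1)) {c : ℝ} (hc : 0 < c) :
    Summable (fun k : ℕ => θ (k + 1) * Real.exp (-((k : ℝ) + 1) * c)) := by
  obtain ⟨K, hK1, hK⟩ := theta_le_two hθ
  set p : ℕ := ⌈α⌉₊ with hp
  have hr : ‖Real.exp (-c)‖ < 1 := by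
    rw [Real.norm_eq_abs, Real.abs_exp]; exact Real.exp_lt_one_iff.2 (by linarith)
  have base : Summable (fun j : ℕ => 2 * ((j : ℝ) ^ p * Real.exp (-c) ^ j)) :=
    (summable_pow_mul_geometric_of_norm_lt_one p hr).mul_left 2
  have base' : Summable (fun n : ℕ => 2 * (((n + (K+1) : ℕ) : ℝ) ^ p * Real.exp (-c) ^ (n + (K+1)))) :=
    (summable_nat_add_iff (K+1)).2 base
  apply (summable_nat_add_iff K).1
  apply Summable.of_nonneg_of_le
    (fun n => mul_nonneg (hθ0 _) (Real.exp_pos _).le) _ base'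
  intro n
  set j : ℕ := n + K + 1 with hj
  have hjK : K ≤ j := by omega
  have hj1 : (1:ℝ) ≤ (j:ℝ) := by exact_mod_cast Nat.one_le_iff_ne_zero.2 (by omega)
  have hcast : ((n + K : ℕ) : ℝ) + 1 = (j : ℝ) := by push_cast [hj]; ring
  have hexp : Real.exp (-(((n + K : ℕ) : ℝ) + 1) * c) = Real.exp (-c) ^ j := by
    rw [hcast, ← Real.exp_nat_mul]; ring_nf
  have hθle : θ j ≤ 2 * (j:ℝ) ^ p := by
    refine (hK j hjK).trans ?_
    have : (j:ℝ) ^ α ≤ (j:ℝ) ^ (p:ℝ) :=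
      Real.rpow_le_rpow_of_exponent_le hj1 (Nat.le_ceil α)
    rw [Real.rpow_natCast] at this
    linarith
  have hfinal : θ j * Real.exp (-(((n + K : ℕ) : ℝ) + 1) * c)
      ≤ 2 * ((j : ℝ) ^ p * Real.exp (-c) ^ j) := by
    rw [hexp, ← mul_assoc]
    exact mul_le_mul_of_nonneg_right hθle (pow_nonneg (Real.exp_pos _).le _)
  have hje : n + (K + 1) = j := by omega
  simpa [hje] using hfinal

lemma v_tendsto_zero {α : ℝ} (hα : 0 < α) {θ : ℕ → ℝ} (hθ0 : ∀ k, 0 ≤ θ k)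
    (hθ : Tendsto (fun k : ℕ => θ k / (k : ℝ) ^ α) atTop (𝓝 1)) {v : ℕ → ℝ}
    (hv : ∀ n : ℕ, 1 ≤ n → 0 < v n ∧
      (∑' k : ℕ, θ (k + 1) * Real.exp (-((k : ℝ) + 1) * v n)) = n) :
    Tendsto v atTop (𝓝 0) := by
  rw [tendsto_order]
  constructor
  · intro a ha
    filter_upwards [eventually_ge_atTop 1] with n hn
    exact lt_trans ha (hv n hn).1
  · intro b hb
    have hsum : Summable (fun k : ℕ => θ (k + 1) * Real.exp (-((k : ℝ) + 1) * b)) :=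
      summable_theta_exp hα hθ0 hθ hb
    set C : ℝ := ∑' k : ℕ, θ (k + 1) * Real.exp (-((k : ℝ) + 1) * b) with hC
    filter_upwards [eventually_ge_atTop (max 1 (⌊C⌋₊ + 1))] with n hn
    by_contra hcon
    push_neg at hcon
    have hn1 : 1 ≤ n := le_trans (le_max_left _ _) hn
    obtain ⟨hvpos, hveq⟩ := hv n hn1
    have hle : (n : ℝ) ≤ C := by
      rw [← hveq]
      refine Summable.tsum_le_tsum (fun k => ?_) ?_ hsum
      · apply mul_le_mul_of_nonneg_left _ (hθ0 _)
        apply Real.exp_le_exp.2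
        have : (0:ℝ) ≤ (k:ℝ) + 1 := by positivity
        nlinarith
      · apply Summable.of_nonneg_of_le
          (fun k => mul_nonneg (hθ0 _) (Real.exp_pos _).le) _ hsum
        intro k
        apply mul_le_mul_of_nonneg_left _ (hθ0 _)
        apply Real.exp_le_exp.2
        have : (0:ℝ) ≤ (k:ℝ) + 1 := by positivity
        nlinarith
    have h2 : (⌊C⌋₊ + 1 : ℝ) ≤ (n:ℝ) := by
      exact_mod_cast le_trans (le_max_right _ _) hn
    have := Nat.lt_floor_add_one C
    linarith


lemma theta_two_sided {α : ℝ} {θ : ℕ → ℝ}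
    (hθ : Tendsto (fun k : ℕ => θ k / (k : ℝ) ^ α) atTop (𝓝 1)) {δ : ℝ} (hδ : 0 < δ) :
    ∃ K : ℕ, ∀ k, K ≤ k → θ k ≤ (1+δ) * (k:ℝ)^α ∧ (1-δ) * (k:ℝ)^α ≤ θ k := by
  have h1 : ∀ᶠ k : ℕ in atTop, θ k / (k:ℝ)^α < 1+δ := hθ.eventually_lt_const (by linarith)
  have h2 : ∀ᶠ k : ℕ in atTop, 1-δ < θ k / (k:ℝ)^α := hθ.eventually_const_lt (by linarith)
  obtain ⟨K, hKf⟩ := (h1.and (h2.and (eventually_ge_atTop 1))).exists_forall_of_atTop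
  refine ⟨K, fun k hk => ?_⟩
  obtain ⟨ha, hb, hc⟩ := hKf k hk
  have hk0 : (0:ℝ) < (k:ℝ)^α := Real.rpow_pos_of_pos (by exact_mod_cast hc) α
  constructor
  · rw [div_lt_iff₀ hk0] at ha; linarith
  · rw [lt_div_iff₀ hk0] at hb; linarith


section
variable {α : ℝ} {v : ℕ → ℝ} {y : ℝ}

lemma zq_eq (α : ℝ) (v : ℕ → ℝ) (y : ℝ) (n : ℕ) :
    zq α v y n = Lq α v n + (α - 1) * Real.log (Lq α v n) - Real.log y := by
  simp [zq, elln, Lq]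

lemma L_atTop (hα : 0 < α) (hvpos : ∀ᶠ n in atTop, 0 < v n)
    (hv0 : Tendsto v atTop (𝓝 0)) : Tendsto (Lq α v) atTop atTop := by
  apply Tendsto.const_mul_atTop hα
  apply Real.tendsto_log_atTop.comp
  apply Tendsto.inv_tendsto_nhdsGT_zero
  rw [tendsto_nhdsWithin_iff]
  exact ⟨hv0, hvpos⟩

lemma logL_div_L (hα : 0 < α) (hvpos : ∀ᶠ n in atTop, 0 < v n)
    (hv0 : Tendsto v atTop (𝓝 0)) :
    Tendsto (fun n => Real.log (Lq α v n) / Lq α v n) atTop (𝓝 0) :=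
  (Real.isLittleO_log_id_atTop.tendsto_div_nhds_zero).comp (L_atTop hα hvpos hv0)

lemma z_div_L (hα : 0 < α) (hvpos : ∀ᶠ n in atTop, 0 < v n)
    (hv0 : Tendsto v atTop (𝓝 0)) :
    Tendsto (fun n => zq α v y n / Lq α v n) atTop (𝓝 1) := by
  have hL := L_atTop hα hvpos hv0
  have h1 : Tendsto (fun n => 1 + (α - 1) * (Real.log (Lq α v n) / Lq α v n)
      - Real.log y * (Lq α v n)⁻¹) atTop (𝓝 1) := by
    have := ((logL_div_L hα hvpos hv0).const_mul (α - 1)).const_add 1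
    have h2 := (hL.inv_tendsto_atTop).const_mul (Real.log y)
    simpa using this.sub h2
  apply h1.congr'
  filter_upwards [hL.eventually_gt_atTop 0] with n hn
  rw [zq_eq]
  field_simp

lemma z_atTop (hα : 0 < α) (hvpos : ∀ᶠ n in atTop, 0 < v n)
    (hv0 : Tendsto v atTop (𝓝 0)) : Tendsto (zq α v y) atTop atTop := by
  have hL := L_atTop hα hvpos hv0
  have h1 : Tendsto (fun n => Lq α v n * (zq α v y n / Lq α v n)) atTop atTop :=
    Tendsto.atTop_mul_pos (by norm_num) hL (z_div_L hα hvpos hv0)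
  apply h1.congr'
  filter_upwards [hL.eventually_gt_atTop 0] with n hn
  field_simp

lemma x_atTop (hα : 0 < α) (hvpos : ∀ᶠ n in atTop, 0 < v n)
    (hv0 : Tendsto v atTop (𝓝 0)) : Tendsto (xq α v y) atTop atTop := by
  have h1 : Tendsto (fun n => nstar v n) atTop atTop := by
    apply Tendsto.inv_tendsto_nhdsGT_zero
    rw [tendsto_nhdsWithin_iff]
    exact ⟨hv0, hvpos⟩
  exact h1.atTop_mul_atTop₀ (z_atTop hα hvpos hv0)

lemma m_atTop (hα : 0 < α) (hvpos : ∀ᶠ n in atTop, 0 < v n)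
    (hv0 : Tendsto v atTop (𝓝 0)) : Tendsto (fun n => (mq α v y n : ℝ)) atTop atTop :=
  tendsto_atTop_mono (fun n => Nat.le_ceil _) (x_atTop hα hvpos hv0)

lemma m_atTop' (hα : 0 < α) (hvpos : ∀ᶠ n in atTop, 0 < v n)
    (hv0 : Tendsto v atTop (𝓝 0)) : Tendsto (fun n => mq α v y n) atTop atTop := by
  have := m_atTop (v := v) (y := y) hα hvpos hv0
  exact_mod_cast tendsto_natCast_atTop_iff.1 this

lemma m_div_x (hα : 0 < α) (hvpos : ∀ᶠ n in atTop, 0 < v n)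
    (hv0 : Tendsto v atTop (𝓝 0)) :
    Tendsto (fun n => (mq α v y n : ℝ) / xq α v y n) atTop (𝓝 1) := by
  have hx := x_atTop (y := y) hα hvpos hv0
  apply tendsto_of_tendsto_of_tendsto_of_le_of_le' (g := fun _ => (1:ℝ))
    (h := fun n => 1 + (xq α v y n)⁻¹)
  · exact tendsto_const_nhds
  · simpa using (tendsto_const_nhds (x := (1:ℝ))).add hx.inv_tendsto_atTop
  · filter_upwards [hx.eventually_ge_atTop 1] with n hn
    rw [le_div_iff₀ (by linarith)]
    simpa [mq] using (Nat.le_ceil _).trans (le_refl _)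
  · filter_upwards [hx.eventually_ge_atTop 1] with n hn
    have h1 := (Nat.ceil_lt_add_one (by linarith : (0:ℝ) ≤ xq α v y n)).le
    rw [div_le_iff₀ (by linarith)]
    have : (0 : ℝ) < xq α v y n := by linarith
    calc (mq α v y n : ℝ) ≤ xq α v y n + 1 := h1
    _ ≤ (1 + (xq α v y n)⁻¹) * xq α v y n := by field_simp; exact le_rfl
lemma mv_atTop (hα : 0 < α) (hvpos : ∀ᶠ n in atTop, 0 < v n)
    (hv0 : Tendsto v atTop (𝓝 0)) :
    Tendsto (fun n => (mq α v y n : ℝ) * v n) atTop atTop := by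
  apply tendsto_atTop_mono' atTop (f₁ := zq α v y)
  · filter_upwards [hvpos] with n hn
    have h1 : xq α v y n * v n = zq α v y n := by
      rw [xq, nstar]; field_simp
    calc zq α v y n = xq α v y n * v n := h1.symm
    _ ≤ (mq α v y n : ℝ) * v n := by
        apply mul_le_mul_of_nonneg_right (Nat.le_ceil _) hn.le
  · exact z_atTop hα hvpos hv0

lemma mxv_zero (hα : 0 < α) (hvpos : ∀ᶠ n in atTop, 0 < v n)
    (hv0 : Tendsto v atTop (𝓝 0)) :
    Tendsto (fun n => ((mq α v y n : ℝ) - xq α v y n) * v n) atTop (𝓝 0) := by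
  have hx := x_atTop (y := y) hα hvpos hv0
  apply tendsto_of_tendsto_of_tendsto_of_le_of_le' (g := fun _ => (0:ℝ)) (h := v)
    tendsto_const_nhds hv0
  · filter_upwards [hvpos] with n hn
    exact mul_nonneg (by simpa [mq] using Nat.le_ceil (xq α v y n)) hn.le
  · filter_upwards [hvpos, hx.eventually_ge_atTop 0] with n hn hx0
    have h1 : (mq α v y n : ℝ) ≤ xq α v y n + 1 := (Nat.ceil_lt_add_one hx0).le
    nlinarith [Nat.le_ceil (xq α v y n)]

-- (F11) w → 0
lemma w_zero (hα : 0 < α) (hvpos : ∀ᶠ n in atTop, 0 < v n)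
    (hv0 : Tendsto v atTop (𝓝 0)) (c : ℝ) :
    Tendsto (wq α v y c) atTop (𝓝 0) := by
  have h1 : Tendsto (fun n => c / (mq α v y n : ℝ)) atTop (𝓝 0) := by
    simpa [div_eq_mul_inv] using ((m_atTop (y := y) hα hvpos hv0).inv_tendsto_atTop).const_mul c
  have := hv0.sub h1; rw [sub_zero] at this; exact this

-- (F12') c/(mv) → 0
lemma c_div_mv (hα : 0 < α) (hvpos : ∀ᶠ n in atTop, 0 < v n)
    (hv0 : Tendsto v atTop (𝓝 0)) (c : ℝ) :
    Tendsto (fun n => c / ((mq α v y n : ℝ) * v n)) atTop (𝓝 0) := by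
  have := ((mv_atTop (y := y) hα hvpos hv0).inv_tendsto_atTop).const_mul c
  simp only [mul_zero] at this
  apply this.congr
  intro n
  simp [div_eq_mul_inv, mul_inv]

-- (F12) eventually w > v/2 > 0
lemma w_pos (hα : 0 < α) (hvpos : ∀ᶠ n in atTop, 0 < v n)
    (hv0 : Tendsto v atTop (𝓝 0)) (c : ℝ) :
    ∀ᶠ n in atTop, v n / 2 ≤ wq α v y c n ∧ 0 < wq α v y c n := by
  have h2 : ∀ᶠ n in atTop, c / ((mq α v y n : ℝ) * v n) < 1/2 :=
    (c_div_mv hα hvpos hv0 c).eventually_lt_const (by norm_num)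
  have hm := (m_atTop (y := y) hα hvpos hv0).eventually_ge_atTop 1
  filter_upwards [hvpos, h2, hm] with n hn h2n hmn
  have hmpos : (0:ℝ) < (mq α v y n : ℝ) := by linarith
  have key : c / (mq α v y n : ℝ) = v n * (c / ((mq α v y n : ℝ) * v n)) := by
    field_simp
  have : wq α v y c n = v n * (1 - c / ((mq α v y n : ℝ) * v n)) := by
    rw [wq, key]; ring
  rw [this]
  constructor
  · nlinarith
  · nlinarith

-- w/v → 1 and v/(1 - exp(-w)) → 1
lemma v_div_one_sub_exp (hα : 0 < α) (hvpos : ∀ᶠ n in atTop, 0 < v n)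
    (hv0 : Tendsto v atTop (𝓝 0)) (c : ℝ) :
    Tendsto (fun n => v n / (1 - Real.exp (-wq α v y c n))) atTop (𝓝 1) := by
  have hwv : Tendsto (fun n => wq α v y c n / v n) atTop (𝓝 1) := by
    have h1 : Tendsto (fun n => 1 - c / ((mq α v y n : ℝ) * v n)) atTop (𝓝 1) := by
      simpa using (tendsto_const_nhds (x := (1:ℝ))).sub (c_div_mv hα hvpos hv0 c)
    apply h1.congr'
    filter_upwards [hvpos, (m_atTop (y := y) hα hvpos hv0).eventually_ge_atTop 1]
      with n hn hmn
    have hmpos : (0:ℝ) < (mq α v y n : ℝ) := by linarith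
    rw [wq]
    field_simp
  have hw0 := w_zero (y := y) hα hvpos hv0 c
  have hwne : ∀ᶠ n in atTop, wq α v y c n ≠ 0 := by
    filter_upwards [w_pos (y := y) hα hvpos hv0 c] with n hn; exact hn.2.ne'
  -- (exp w - 1)/w → 1
  have hslope : Tendsto (fun t : ℝ => (Real.exp t - 1) / t) (𝓝[≠] 0) (𝓝 1) := by
    have := hasDerivAt_iff_tendsto_slope.1 (Real.hasDerivAt_exp 0)
    simp only [Real.exp_zero] at this
    apply this.congr
    intro t
    simp [slope_def_field]
  have hwin : Tendsto (wq α v y c) atTop (𝓝[≠] 0) := by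
    rw [tendsto_nhdsWithin_iff]
    exact ⟨hw0, hwne.mono fun n h => h⟩
  have hA : Tendsto (fun n => (Real.exp (wq α v y c n) - 1) / wq α v y c n) atTop (𝓝 1) :=
    hslope.comp hwin
  have hexpw : Tendsto (fun n => Real.exp (-wq α v y c n)) atTop (𝓝 1) := by
    have : Tendsto (fun n => -wq α v y c n) atTop (𝓝 0) := by simpa using hw0.neg
    simpa [Function.comp_def] using (Real.continuous_exp.tendsto 0).comp this
  have hB : Tendsto (fun n => (1 - Real.exp (-wq α v y c n)) / wq α v y c n) atTop (𝓝 1) := by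
    have := hexpw.mul hA
    simp only [one_mul] at this
    apply this.congr'
    filter_upwards [hwne] with n hn
    rw [Real.exp_neg]
    have he := (Real.exp_pos (wq α v y c n)).ne'
    field_simp
  -- combine
  have hfinal := (hwv.inv₀ one_ne_zero).mul (hB.inv₀ one_ne_zero)
  simp only [inv_one, one_mul] at hfinal
  apply hfinal.congr'
  filter_upwards [hvpos, hwne, w_pos (y := y) hα hvpos hv0 c] with n hn hwn hwp
  have h1 : 1 - Real.exp (-wq α v y c n) ≠ 0 := by
    have : Real.exp (-wq α v y c n) < 1 := Real.exp_lt_one_iff.2 (by linarith [hwp.2])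
    linarith
  field_simp

lemma E_tendsto (hα : 0 < α) (hy : 0 < y) (hvpos : ∀ᶠ n in atTop, 0 < v n)
    (hv0 : Tendsto v atTop (𝓝 0)) :
    Tendsto (fun n => (α - 1) * Real.log (mq α v y n) - (mq α v y n : ℝ) * v n
      - Real.log (v n)) atTop (𝓝 (Real.log y)) := by
  have t1 : Tendsto (fun n => Real.log ((mq α v y n : ℝ) / xq α v y n)) atTop (𝓝 0) := by
    have := ((Real.continuousAt_log one_ne_zero).tendsto).comp (m_div_x (y := y) hα hvpos hv0)
    simpa [Function.comp_def] using this
  have t2 := mxv_zero (y := y) hα hvpos hv0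
  have t3 : Tendsto (fun n => Real.log (zq α v y n / Lq α v n)) atTop (𝓝 0) := by
    have := ((Real.continuousAt_log one_ne_zero).tendsto).comp (z_div_L (y := y) hα hvpos hv0)
    simpa [Function.comp_def] using this
  have hcomb : Tendsto (fun n => Real.log y + (α - 1) * Real.log ((mq α v y n : ℝ) / xq α v y n)
      - ((mq α v y n : ℝ) - xq α v y n) * v n
      + (α - 1) * Real.log (zq α v y n / Lq α v n)) atTop (𝓝 (Real.log y)) := by
    have := (((t1.const_mul (α - 1)).const_add (Real.log y)).sub t2).add (t3.const_mul (α - 1))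
    simpa using this
  apply hcomb.congr'
  filter_upwards [hvpos, hv0.eventually_lt_const one_pos,
    (L_atTop hα hvpos hv0).eventually_gt_atTop 0,
    (z_atTop (y := y) hα hvpos hv0).eventually_gt_atTop 0,
    (x_atTop (y := y) hα hvpos hv0).eventually_gt_atTop 0,
    (m_atTop (y := y) hα hvpos hv0).eventually_gt_atTop 0] with n hv hv1 hL hz hx hm
  have hlm := Real.log_div hm.ne' hx.ne'
  have hlz := Real.log_div hz.ne' hL.ne'
  have hlx : Real.log (xq α v y n) = Real.log (zq α v y n) - Real.log (v n) := by
    rw [xq, nstar, Real.log_mul (inv_ne_zero hv.ne') hz.ne', Real.log_inv]; ring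
  have hxv : xq α v y n * v n = zq α v y n := by
    rw [xq, nstar]; field_simp
  have hzz := zq_eq α v y n
  have hLL : Lq α v n = -(α * Real.log (v n)) := by
    rw [Lq, nstar, Real.log_inv]; ring
  rw [hlm, hlz]
  linear_combination (-(α - 1)) * hlx + hxv + hzz + hLL

lemma G_tendsto (hα : 0 < α) (hy : 0 < y) (hvpos : ∀ᶠ n in atTop, 0 < v n)
    (hv0 : Tendsto v atTop (𝓝 0)) (c : ℝ) :
    Tendsto (fun n => (mq α v y n : ℝ) ^ (α - 1) * Real.exp (-(mq α v y n : ℝ) * v n)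
      / (1 - Real.exp (-wq α v y c n))) atTop (𝓝 y) := by
  have hFF : Tendsto (fun n => (mq α v y n : ℝ) ^ (α - 1) * Real.exp (-(mq α v y n : ℝ) * v n)
      / v n) atTop (𝓝 y) := by
    have hE := E_tendsto (y := y) hα hy hvpos hv0
    have hexpE := (Real.continuous_exp.tendsto _).comp hE
    rw [Real.exp_log hy] at hexpE
    apply hexpE.congr'
    filter_upwards [hvpos, (m_atTop (y := y) hα hvpos hv0).eventually_gt_atTop 0]
      with n hv hm
    show Real.exp _ = _
    have hvinv : (v n)⁻¹ = Real.exp (-Real.log (v n)) := by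
      rw [Real.exp_neg, Real.exp_log hv]
    rw [Real.rpow_def_of_pos hm, div_eq_mul_inv, hvinv, ← Real.exp_add, ← Real.exp_add]
    congr 1
    ring
  have hfinal := hFF.mul (v_div_one_sub_exp (y := y) hα hvpos hv0 c)
  simp only [mul_one] at hfinal
  apply hfinal.congr'
  filter_upwards [hvpos, w_pos (y := y) hα hvpos hv0 c] with n hv hw
  have h1 : 1 - Real.exp (-wq α v y c n) ≠ 0 := by
    have : Real.exp (-wq α v y c n) < 1 := Real.exp_lt_one_iff.2 (by linarith [hw.2])
    linarith
  field_simp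

end

lemma geo_dominate {αr c vn : ℝ} (hc0 : 0 ≤ c) (hc : αr - 1 ≤ c) {m k : ℕ}
    (hm : 1 ≤ m) (hmk : m ≤ k) :
    (k : ℝ) ^ (αr - 1) * Real.exp (-(k : ℝ) * vn)
      ≤ (m : ℝ) ^ (αr - 1) * Real.exp (-(m : ℝ) * vn)
        * Real.exp (-(vn - c / (m : ℝ))) ^ (k - m) := by
  have hm0 : (0:ℝ) < (m:ℝ) := by exact_mod_cast hm
  have hk0 : (0:ℝ) < (k:ℝ) := by exact_mod_cast lt_of_lt_of_le hm hmk
  have hcast : ((k - m : ℕ) : ℝ) = (k : ℝ) - (m : ℝ) := by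
    rw [Nat.cast_sub hmk]
  rw [Real.rpow_def_of_pos hm0, Real.rpow_def_of_pos hk0, ← Real.exp_nat_mul,
    ← Real.exp_add, ← Real.exp_add, ← Real.exp_add]
  apply Real.exp_le_exp.2
  rw [hcast]
  have hdiv : (0:ℝ) < (k:ℝ) / m := div_pos hk0 hm0
  have h1le : (1:ℝ) ≤ (k:ℝ) / m := by
    rw [le_div_iff₀ hm0]; simpa using (by exact_mod_cast hmk : (m:ℝ) ≤ k)
  have hlog1 : Real.log ((k:ℝ)/m) ≤ (k:ℝ)/m - 1 := Real.log_le_sub_one_of_pos hdiv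
  have hlog2 : 0 ≤ Real.log ((k:ℝ)/m) := Real.log_nonneg h1le
  have hlogd : Real.log ((k:ℝ)/m) = Real.log k - Real.log m :=
    Real.log_div hk0.ne' hm0.ne'
  rw [hlogd] at hlog1 hlog2
  have h1 : (αr - 1) * (Real.log k - Real.log m) ≤ c * (Real.log k - Real.log m) :=
    mul_le_mul_of_nonneg_right hc hlog2
  have h2 : c * (Real.log k - Real.log m) ≤ c * ((k:ℝ)/m - 1) :=
    mul_le_mul_of_nonneg_left hlog1 hc0
  have hmm : (m:ℝ) * (m:ℝ)⁻¹ = 1 := mul_inv_cancel₀ hm0.ne'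
  have h3 : c * ((k:ℝ)/m - 1) = ((k:ℝ) - m) * (c/ m) := by
    field_simp
  nlinarith [h1, h2, h3]

lemma geo_dominate_lower {αr c vn : ℝ} (hc0 : c ≤ 0) (hc : c ≤ αr - 1) {m k : ℕ}
    (hm : 1 ≤ m) (hmk : m ≤ k) :
    (m : ℝ) ^ (αr - 1) * Real.exp (-(m : ℝ) * vn)
        * Real.exp (-(vn - c / (m : ℝ))) ^ (k - m)
      ≤ (k : ℝ) ^ (αr - 1) * Real.exp (-(k : ℝ) * vn) := by
  have hm0 : (0:ℝ) < (m:ℝ) := by exact_mod_cast hm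
  have hk0 : (0:ℝ) < (k:ℝ) := by exact_mod_cast lt_of_lt_of_le hm hmk
  have hcast : ((k - m : ℕ) : ℝ) = (k : ℝ) - (m : ℝ) := by
    rw [Nat.cast_sub hmk]
  rw [Real.rpow_def_of_pos hm0, Real.rpow_def_of_pos hk0, ← Real.exp_nat_mul,
    ← Real.exp_add, ← Real.exp_add, ← Real.exp_add]
  apply Real.exp_le_exp.2
  rw [hcast]
  have hdiv : (0:ℝ) < (k:ℝ) / m := div_pos hk0 hm0
  have h1le : (1:ℝ) ≤ (k:ℝ) / m := by
    rw [le_div_iff₀ hm0]; simpa using (by exact_mod_cast hmk : (m:ℝ) ≤ k)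
  have hlog1 : Real.log ((k:ℝ)/m) ≤ (k:ℝ)/m - 1 := Real.log_le_sub_one_of_pos hdiv
  have hlog2 : 0 ≤ Real.log ((k:ℝ)/m) := Real.log_nonneg h1le
  have hlogd : Real.log ((k:ℝ)/m) = Real.log k - Real.log m :=
    Real.log_div hk0.ne' hm0.ne'
  rw [hlogd] at hlog1 hlog2
  have h1 : c * (Real.log k - Real.log m) ≤ (αr - 1) * (Real.log k - Real.log m) :=
    mul_le_mul_of_nonneg_right hc hlog2
  have h2 : c * ((k:ℝ)/m - 1) ≤ c * (Real.log k - Real.log m) :=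
    mul_le_mul_of_nonpos_left hlog1 hc0
  have h3 : c * ((k:ℝ)/m - 1) = ((k:ℝ) - m) * (c/ m) := by
    field_simp
  nlinarith [h1, h2, h3]

lemma tsum_geo (m : ℕ) {C r : ℝ} (hC : 0 ≤ C) (hr0 : 0 ≤ r) (hr1 : r < 1) :
    Summable (fun k : ℕ => if m ≤ k then C * r ^ (k - m) else 0) ∧
    ∑' k : ℕ, (if m ≤ k then C * r ^ (k - m) else 0) = C * (1 - r)⁻¹ := by
  have hkey : (fun k : ℕ => if m ≤ k + m then C * r ^ (k + m - m) else 0)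
      = fun k : ℕ => C * r ^ k := by
    funext k
    rw [if_pos (Nat.le_add_left m k), Nat.add_sub_cancel]
  have hs : Summable (fun k : ℕ => if m ≤ k then C * r ^ (k - m) else 0) := by
    apply (summable_nat_add_iff m).1
    rw [show (fun k : ℕ => if m ≤ k + m then C * r ^ (k + m - m) else 0)
        = fun k : ℕ => C * r ^ k from hkey]
    exact (summable_geometric_of_lt_one hr0 hr1).mul_left C
  refine ⟨hs, ?_⟩
  have h0 := (Summable.sum_add_tsum_nat_add m hs).symm
  rw [h0, Finset.sum_eq_zero, zero_add]
  · rw [show (fun k : ℕ => if m ≤ k + m then C * r ^ (k + m - m) else 0)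
        = fun k : ℕ => C * r ^ k from hkey, tsum_mul_left,
      tsum_geometric_of_lt_one hr0 hr1]
  · intro i hi
    rw [if_neg]
    simp only [Finset.mem_range] at hi
    omega

lemma S_bounds {α : ℝ} {v : ℕ → ℝ} {y : ℝ} {θ : ℕ → ℝ} {δ : ℝ}
    (hα : 0 < α) (hθ0 : ∀ k, 0 ≤ θ k) (hδ0 : 0 < δ) (hδ1 : δ ≤ 1) {K : ℕ}
    (hK : ∀ k, K ≤ k → θ k ≤ (1+δ) * (k:ℝ)^α ∧ (1-δ) * (k:ℝ)^α ≤ θ k)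
    {n : ℕ} (hv : 0 < v n) (hmK : K ≤ mq α v y n) (hm1 : 1 ≤ mq α v y n)
    (hw : 0 < wq α v y (max 0 (α-1)) n) :
    (∑' k : ℕ, (if xq α v y n ≤ (k:ℝ) then θ k / k * Real.exp (-(k:ℝ) * v n) else 0))
      ≤ (1+δ) * ((mq α v y n : ℝ)^(α-1) * Real.exp (-(mq α v y n : ℝ) * v n)
          / (1 - Real.exp (-wq α v y (max 0 (α-1)) n)))
    ∧ (1-δ) * ((mq α v y n : ℝ)^(α-1) * Real.exp (-(mq α v y n : ℝ) * v n)
          / (1 - Real.exp (-wq α v y (min 0 (α-1)) n)))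
      ≤ (∑' k : ℕ, (if xq α v y n ≤ (k:ℝ) then θ k / k * Real.exp (-(k:ℝ) * v n) else 0)) := by
  set m := mq α v y n with hm
  set A : ℝ := (m:ℝ)^(α-1) * Real.exp (-(m:ℝ) * v n) with hA
  have hm0 : (0:ℝ) < (m:ℝ) := by exact_mod_cast hm1
  have hA0 : 0 ≤ A := mul_nonneg (Real.rpow_nonneg hm0.le _) (Real.exp_pos _).le
  -- the two decay rates
  have hwm : 0 < wq α v y (min 0 (α-1)) n := by
    have h1 : (min 0 (α-1)) / (m:ℝ) ≤ 0 :=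
      div_nonpos_of_nonpos_of_nonneg (min_le_left _ _) hm0.le
    have : wq α v y (min 0 (α-1)) n = v n - (min 0 (α-1)) / (m:ℝ) := rfl
    rw [this]; linarith
  have hrU0 : 0 ≤ Real.exp (-wq α v y (max 0 (α-1)) n) := (Real.exp_pos _).le
  have hrU1 : Real.exp (-wq α v y (max 0 (α-1)) n) < 1 :=
    Real.exp_lt_one_iff.2 (by linarith)
  have hrL0 : 0 ≤ Real.exp (-wq α v y (min 0 (α-1)) n) := (Real.exp_pos _).le
  have hrL1 : Real.exp (-wq α v y (min 0 (α-1)) n) < 1 :=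
    Real.exp_lt_one_iff.2 (by linarith)
  have hC0 : 0 ≤ (1+δ) * A := mul_nonneg (by linarith) hA0
  have hC'0 : 0 ≤ (1-δ) * A := mul_nonneg (by linarith) hA0
  obtain ⟨hsU, htU⟩ := tsum_geo m hC0 hrU0 hrU1
  obtain ⟨hsL, htL⟩ := tsum_geo m hC'0 hrL0 hrL1
  -- pointwise upper bound
  have pwU : ∀ k : ℕ, (if xq α v y n ≤ (k:ℝ) then θ k / k * Real.exp (-(k:ℝ) * v n) else 0)
      ≤ (if m ≤ k then (1+δ) * A * Real.exp (-wq α v y (max 0 (α-1)) n) ^ (k - m) else 0) := by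
    intro k
    by_cases h : m ≤ k
    · rw [if_pos (Nat.ceil_le.mp h), if_pos h]
      have hk1 : 1 ≤ k := le_trans hm1 h
      have hk0 : (0:ℝ) < (k:ℝ) := by exact_mod_cast hk1
      have hka : (k:ℝ)^α = (k:ℝ)^(α-1) * k := by
        rw [← Real.rpow_add_one hk0.ne' (α-1)]; norm_num
      have hθk : θ k / k ≤ (1+δ) * (k:ℝ)^(α-1) := by
        rw [div_le_iff₀ hk0]
        have := (hK k (le_trans hmK h)).1
        rw [hka] at this
        linarith
      have hgeo := geo_dominate (αr := α) (vn := v n) (le_max_left 0 (α-1))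
        (le_max_right 0 (α-1)) hm1 h
      calc θ k / k * Real.exp (-(k:ℝ) * v n)
          ≤ ((1+δ) * (k:ℝ)^(α-1)) * Real.exp (-(k:ℝ) * v n) :=
            mul_le_mul_of_nonneg_right hθk (Real.exp_pos _).le
        _ = (1+δ) * ((k:ℝ)^(α-1) * Real.exp (-(k:ℝ) * v n)) := by ring
        _ ≤ (1+δ) * (A * Real.exp (-(v n - (max 0 (α-1)) / (m:ℝ))) ^ (k - m)) := by
            apply mul_le_mul_of_nonneg_left _ (by linarith)
            rw [hA]
            linarith [hgeo]
        _ = (1+δ) * A * Real.exp (-wq α v y (max 0 (α-1)) n) ^ (k - m) := by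
            rw [wq]; ring
    · rw [if_neg (fun hx => h (Nat.ceil_le.mpr hx)), if_neg h]
  -- pointwise lower bound
  have pwL : ∀ k : ℕ,
      (if m ≤ k then (1-δ) * A * Real.exp (-wq α v y (min 0 (α-1)) n) ^ (k - m) else 0)
      ≤ (if xq α v y n ≤ (k:ℝ) then θ k / k * Real.exp (-(k:ℝ) * v n) else 0) := by
    intro k
    by_cases h : m ≤ k
    · rw [if_pos (Nat.ceil_le.mp h), if_pos h]
      have hk1 : 1 ≤ k := le_trans hm1 h
      have hk0 : (0:ℝ) < (k:ℝ) := by exact_mod_cast hk1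
      have hka : (k:ℝ)^α = (k:ℝ)^(α-1) * k := by
        rw [← Real.rpow_add_one hk0.ne' (α-1)]; norm_num
      have hθk : (1-δ) * (k:ℝ)^(α-1) ≤ θ k / k := by
        rw [le_div_iff₀ hk0]
        have := (hK k (le_trans hmK h)).2
        rw [hka] at this
        linarith
      have hgeo := geo_dominate_lower (αr := α) (vn := v n) (min_le_left 0 (α-1))
        (min_le_right 0 (α-1)) hm1 h
      calc (1-δ) * A * Real.exp (-wq α v y (min 0 (α-1)) n) ^ (k - m)
          = (1-δ) * (A * Real.exp (-(v n - (min 0 (α-1)) / (m:ℝ))) ^ (k - m)) := by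
            rw [wq]; ring
        _ ≤ (1-δ) * ((k:ℝ)^(α-1) * Real.exp (-(k:ℝ) * v n)) := by
            apply mul_le_mul_of_nonneg_left _ (by linarith)
            rw [hA]
            linarith [hgeo]
        _ = ((1-δ) * (k:ℝ)^(α-1)) * Real.exp (-(k:ℝ) * v n) := by ring
        _ ≤ θ k / k * Real.exp (-(k:ℝ) * v n) :=
            mul_le_mul_of_nonneg_right hθk (Real.exp_pos _).le
    · rw [if_neg (fun hx => h (Nat.ceil_le.mpr hx)), if_neg h]
  have hSnonneg : ∀ k : ℕ,
      0 ≤ (if xq α v y n ≤ (k:ℝ) then θ k / k * Real.exp (-(k:ℝ) * v n) else 0) := by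
    intro k
    split_ifs
    · exact mul_nonneg (div_nonneg (hθ0 k) (Nat.cast_nonneg k)) (Real.exp_pos _).le
    · exact le_refl _
  have hSsum : Summable (fun k : ℕ =>
      if xq α v y n ≤ (k:ℝ) then θ k / k * Real.exp (-(k:ℝ) * v n) else 0) :=
    Summable.of_nonneg_of_le hSnonneg pwU hsU
  constructor
  · calc (∑' k : ℕ, (if xq α v y n ≤ (k:ℝ) then θ k / k * Real.exp (-(k:ℝ) * v n) else 0))
        ≤ ∑' k : ℕ, (if m ≤ k then (1+δ) * A
            * Real.exp (-wq α v y (max 0 (α-1)) n) ^ (k - m) else 0) :=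
          Summable.tsum_le_tsum pwU hSsum hsU
      _ = (1+δ) * A * (1 - Real.exp (-wq α v y (max 0 (α-1)) n))⁻¹ := htU
      _ = (1+δ) * (A / (1 - Real.exp (-wq α v y (max 0 (α-1)) n))) := by
          rw [div_eq_mul_inv]; ring
  · calc (1-δ) * (A / (1 - Real.exp (-wq α v y (min 0 (α-1)) n)))
        = (1-δ) * A * (1 - Real.exp (-wq α v y (min 0 (α-1)) n))⁻¹ := by
          rw [div_eq_mul_inv]; ring
      _ = ∑' k : ℕ, (if m ≤ k then (1-δ) * A
            * Real.exp (-wq α v y (min 0 (α-1)) n) ^ (k - m) else 0) := htL.symm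
      _ ≤ (∑' k : ℕ, (if xq α v y n ≤ (k:ℝ) then θ k / k * Real.exp (-(k:ℝ) * v n) else 0)) :=
          Summable.tsum_le_tsum pwL hsL hSsum

/-- For fixed `y > 0` and `x_n = n*(ℓ_n - log y)`, one has
`∑_{k ≥ x_n} (θ_k/k) e^{-k v_n} → y` as `n → ∞`. -/
theorem tail_sum_tendsto
    (α : ℝ) (hα : 0 < α)
    (θ : ℕ → ℝ) (hθ0 : ∀ k, 0 ≤ θ k)
    (hθ : Tendsto (fun k : ℕ => θ k / (k : ℝ) ^ α) atTop (𝓝 1))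
    (v : ℕ → ℝ)
    (hv : ∀ n : ℕ, 1 ≤ n → 0 < v n ∧
      (∑' k : ℕ, θ (k + 1) * Real.exp (-((k : ℝ) + 1) * v n)) = n)
    (y : ℝ) (hy : 0 < y) :
    Tendsto
      (fun n : ℕ => ∑' k : ℕ,
        if nstar v n * (elln α v n - Real.log y) ≤ (k : ℝ)
          then θ k / (k : ℝ) * Real.exp (-(k : ℝ) * v n) else 0)
      atTop (𝓝 y) := by
  have hvpos : ∀ᶠ n in atTop, 0 < v n := by
    filter_upwards [eventually_ge_atTop 1] with n hn
    exact (hv n hn).1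
  have hv0 : Tendsto v atTop (𝓝 0) := v_tendsto_zero hα hθ0 hθ hv
  have hgoal : Tendsto
      (fun n : ℕ => ∑' k : ℕ,
        if xq α v y n ≤ (k : ℝ)
          then θ k / (k : ℝ) * Real.exp (-(k : ℝ) * v n) else 0)
      atTop (𝓝 y) := by
    rw [tendsto_order]
    constructor
    · -- lower bound
      intro a ha
      set ε : ℝ := y - a with hεdef
      have hε0 : 0 < ε := by simp [hεdef]; linarith
      set δ : ℝ := min 1 (ε / (4 * (y + 1))) with hδdef
      have hδ0 : 0 < δ := lt_min one_pos (by positivity)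
      have hδ1 : δ ≤ 1 := min_le_left _ _
      have hδε : δ ≤ ε / (4 * (y + 1)) := min_le_right _ _
      obtain ⟨K, hK⟩ := theta_two_sided hθ hδ0
      have hGm := G_tendsto (v := v) hα hy hvpos hv0 (min 0 (α-1))
      filter_upwards [hvpos,
        (m_atTop' (y := y) hα hvpos hv0).eventually_ge_atTop (max K 1),
        w_pos (y := y) hα hvpos hv0 (max 0 (α-1)),
        hGm.eventually_const_lt (show y - ε/4 < y by linarith),
        hGm.eventually_lt_const (show y < y + 1 by linarith)]
        with n h1 h2 h3 h4 h5
      obtain ⟨hSU, hSL⟩ := S_bounds (v := v) (y := y) hα hθ0 hδ0 hδ1 hK h1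
        (le_trans (le_max_left K 1) h2) (le_trans (le_max_right K 1) h2) h3.2
      refine lt_of_lt_of_le ?_ hSL
      have hδG : δ * ((mq α v y n : ℝ)^(α-1) * Real.exp (-(mq α v y n : ℝ) * v n)
          / (1 - Real.exp (-wq α v y (min 0 (α-1)) n))) ≤ δ * (y + 1) :=
        mul_le_mul_of_nonneg_left h5.le hδ0.le
      have hδy : δ * (y + 1) ≤ ε / 4 := by
        rw [le_div_iff₀ (by positivity : (0:ℝ) < 4 * (y+1))] at hδε
        nlinarith
      nlinarith
    · -- upper bound
      intro b hb
      set ε : ℝ := b - y with hεdef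
      have hε0 : 0 < ε := by simp [hεdef]; linarith
      set δ : ℝ := min 1 (ε / (4 * (y + 1))) with hδdef
      have hδ0 : 0 < δ := lt_min one_pos (by positivity)
      have hδ1 : δ ≤ 1 := min_le_left _ _
      have hδε : δ ≤ ε / (4 * (y + 1)) := min_le_right _ _
      obtain ⟨K, hK⟩ := theta_two_sided hθ hδ0
      have hGp := G_tendsto (v := v) hα hy hvpos hv0 (max 0 (α-1))
      filter_upwards [hvpos,
        (m_atTop' (y := y) hα hvpos hv0).eventually_ge_atTop (max K 1),
        w_pos (y := y) hα hvpos hv0 (max 0 (α-1)),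
        hGp.eventually_lt_const (show y < y + ε/4 by linarith)]
        with n h1 h2 h3 h4
      obtain ⟨hSU, hSL⟩ := S_bounds (v := v) (y := y) hα hθ0 hδ0 hδ1 hK h1
        (le_trans (le_max_left K 1) h2) (le_trans (le_max_right K 1) h2) h3.2
      refine lt_of_le_of_lt hSU ?_
      have hmul : (1+δ) * ((mq α v y n : ℝ)^(α-1) * Real.exp (-(mq α v y n : ℝ) * v n)
          / (1 - Real.exp (-wq α v y (max 0 (α-1)) n))) < (1+δ) * (y + ε/4) :=
        mul_lt_mul_of_pos_left h4 (by linarith)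
      refine lt_of_lt_of_le hmul ?_
      have h5 : δ * y ≤ ε / 4 := by
        rw [le_div_iff₀ (by positivity : (0:ℝ) < 4 * (y+1))] at hδε
        nlinarith
      have h6 : δ * (ε/4) ≤ ε/4 := by nlinarith
      nlinarith
  exact hgoal
end
end
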